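/- arXiv:1812.01682 — 3 statements merged into one kernel-verified Lean document; each statement's English description precedes it below -/
import Mathlib

section
/- For n > 1, the number of indecomposable Fishburn permutations of size n avoiding the classical pattern 123 is 2^{n−1} − (n − 1). -/
set_option maxHeartbeats 1600000
open Finset

def permList {n : ℕ} (π : Equiv.Perm (Fin n)) : List ℕ :=
  (List.finRange n).map fun i => (π i : ℕ)

def SeqContains (w p : List ℕ) : Prop :=
  ∃ f : Fin p.length → Fin w.length, StrictMono f ∧
    ∀ i j : Fin p.length, p.get i < p.get j ↔ w.get (f i) < w.get (f j)

def AvoidsPat {n : ℕ} (π : Equiv.Perm (Fin n)) (p : List ℕ) : Prop :=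
  ¬ SeqContains (permList π) p

def IsFishburn {n : ℕ} (π : Equiv.Perm (Fin n)) : Prop :=
  ∀ i k : ℕ, ∀ hi : i < n, ∀ hk : k < n, ∀ _hik : i < k,
    (π ⟨i, hi⟩ : ℕ) = (π ⟨k, hk⟩ : ℕ) + 1 →
    ¬ ((π ⟨i, hi⟩ : ℕ) < (π ⟨i + 1, by omega⟩ : ℕ))

def IsIndecomposable {n : ℕ} (π : Equiv.Perm (Fin n)) : Prop :=
  ¬ ∃ k : ℕ, 0 < k ∧ k < n ∧ ∀ i : Fin n, (i : ℕ) < k → (π i : ℕ) < k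

/-- Every ascent is at the position of value 0. -/
def Qprop {n : ℕ} (π : Equiv.Perm (Fin n)) : Prop :=
  ∀ i : ℕ, ∀ h : i + 1 < n,
    (π ⟨i, by omega⟩ : ℕ) < (π ⟨i + 1, h⟩ : ℕ) → (π ⟨i, by omega⟩ : ℕ) = 0

section QLemmas
variable {n : ℕ} (π : Equiv.Perm (Fin n))

lemma permList_length : (permList π).length = n := by simp [permList]

lemma permList_get (i : Fin (permList π).length) :
    (permList π).get i = (π ⟨(i : ℕ), by have := i.isLt; simpa [permList] using this⟩ : ℕ) := by
  rw [List.get_eq_getElem]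
  simp [permList, List.getElem_map, List.getElem_finRange, Fin.cast]

/-- Under `Qprop`, an ascending pair of positions/values forces a zero in `[a,b)`. -/
lemma exists_zero (hQ : Qprop π) :
    ∀ (d a b : ℕ) (hb : b = a + d + 1) (h : b < n),
      (π ⟨a, by omega⟩ : ℕ) < (π ⟨b, h⟩ : ℕ) →
      ∃ m, a ≤ m ∧ m < b ∧ ∃ hm : m < n, (π ⟨m, hm⟩ : ℕ) = 0 := by
  intro d
  induction d with
  | zero =>
    intro a b hb h hlt
    subst hb
    exact ⟨a, le_refl a, by omega, by omega, hQ a h hlt⟩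
  | succ d ih =>
    intro a b hb h hlt
    by_cases h0 : (π ⟨a, by omega⟩ : ℕ) = 0
    · exact ⟨a, le_refl a, by omega, by omega, h0⟩
    · have hna : ¬ ((π ⟨a, by omega⟩ : ℕ) < (π ⟨a + 1, by omega⟩ : ℕ)) :=
        fun hc => h0 (hQ a (by omega) hc)
      have h2 : (π ⟨a + 1, by omega⟩ : ℕ) < (π ⟨b, h⟩ : ℕ) := by omega
      obtain ⟨m, hm1, hm2, hm3⟩ := ih (a + 1) b (by omega) h h2
      exact ⟨m, by omega, by omega, hm3⟩

lemma q_fishburn (hQ : Qprop π) : IsFishburn π := by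
  intro i k hi hk hik heq hasc
  have h1 : i + 1 < n := by omega
  have := hQ i h1 hasc
  omega

lemma q_avoids (hQ : Qprop π) : AvoidsPat π [1, 2, 3] := by
  rintro ⟨f, hmono, hiff⟩
  have v01 : ([1,2,3] : List ℕ).get ⟨0, by norm_num⟩ < ([1,2,3] : List ℕ).get ⟨1, by norm_num⟩ := by decide
  have v12 : ([1,2,3] : List ℕ).get ⟨1, by norm_num⟩ < ([1,2,3] : List ℕ).get ⟨2, by norm_num⟩ := by decide
  have w01 := (hiff ⟨0, by norm_num⟩ ⟨1, by norm_num⟩).1 v01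
  have w12 := (hiff ⟨1, by norm_num⟩ ⟨2, by norm_num⟩).1 v12
  have p01 : f ⟨0, by norm_num⟩ < f ⟨1, by norm_num⟩ := hmono (Fin.mk_lt_mk.mpr (by norm_num))
  have p12 : f ⟨1, by norm_num⟩ < f ⟨2, by norm_num⟩ := hmono (Fin.mk_lt_mk.mpr (by norm_num))
  rw [permList_get, permList_get] at w01
  rw [permList_get, permList_get] at w12
  have hfv : ∀ m : Fin (permList π).length, (m : ℕ) < n := by
    intro m; have := m.isLt; simpa [permList] using this
  have hz1 := exists_zero π hQ ((f ⟨1, by norm_num⟩ : ℕ) - (f ⟨0, by norm_num⟩ : ℕ) - 1)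
    (f ⟨0, by norm_num⟩) (f ⟨1, by norm_num⟩)
    (by have := (Fin.lt_def).1 p01; omega) (hfv _) w01
  have hz2 := exists_zero π hQ ((f ⟨2, by norm_num⟩ : ℕ) - (f ⟨1, by norm_num⟩ : ℕ) - 1)
    (f ⟨1, by norm_num⟩) (f ⟨2, by norm_num⟩)
    (by have := (Fin.lt_def).1 p12; omega) (hfv _) w12
  obtain ⟨m1, hm1a, hm1b, hm1c, hm1d⟩ := hz1
  obtain ⟨m2, hm2a, hm2b, hm2c, hm2d⟩ := hz2
  have heqf : (⟨m1, hm1c⟩ : Fin n) = ⟨m2, hm2c⟩ := by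
    apply π.injective
    apply Fin.ext
    simp only [hm1d, hm2d]
  have hmm : m1 = m2 := by simpa [Fin.ext_iff] using heqf
  have hp01 := (Fin.lt_def).1 p01
  have hp12 := (Fin.lt_def).1 p12
  omega

lemma fishburn_avoids_q (hF : IsFishburn π) (hA : AvoidsPat π [1, 2, 3]) : Qprop π := by
  intro i h hasc
  by_contra h0
  set v : ℕ := (π ⟨i, by omega⟩ : ℕ) with hv
  have hvn : v < n := (π ⟨i, by omega⟩).isLt
  have hv1 : v - 1 < n := by omega
  obtain ⟨kf, hkf⟩ : ∃ kf : Fin n, π kf = ⟨v - 1, hv1⟩ := ⟨π.symm ⟨v-1, hv1⟩, by simp⟩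
  have hkne : (kf : ℕ) ≠ i := by
    intro hc
    have h1 : π kf = π ⟨i, by omega⟩ := by congr 1; exact Fin.ext hc
    rw [hkf] at h1
    have := congrArg Fin.val h1
    simp at this
    omega
  have heq : (π ⟨i, by omega⟩ : ℕ) = (π ⟨(kf:ℕ), kf.isLt⟩ : ℕ) + 1 := by
    have h1 : (⟨(kf:ℕ), kf.isLt⟩ : Fin n) = kf := Fin.ext rfl
    rw [h1, hkf]; simp; omega
  rcases lt_or_gt_of_ne hkne with hki | hik
  · -- kf < i : build 123 pattern at positions kf < i < i+1
    apply hA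
    have hlen : (permList π).length = n := permList_length π
    refine ⟨fun m => Fin.cast hlen.symm (if (m : ℕ) = 0 then ⟨kf, kf.isLt⟩ else if (m:ℕ) = 1 then ⟨i, by omega⟩ else ⟨i+1, h⟩), ?_, ?_⟩
    · intro a b hab
      have ha : (a : ℕ) < 3 := a.isLt
      have hb : (b : ℕ) < 3 := b.isLt
      have hab2 : (a:ℕ) < (b:ℕ) := (Fin.lt_def).1 hab
      simp only [Fin.lt_def, Fin.coe_cast]
      rcases show (a:ℕ) = 0 ∨ (a:ℕ) = 1 ∨ (a:ℕ) = 2 by omega with h1|h1|h1 <;>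
      rcases show (b:ℕ) = 0 ∨ (b:ℕ) = 1 ∨ (b:ℕ) = 2 by omega with h2|h2|h2 <;>
        simp only [h1, h2] <;> simp <;> omega
    · intro a b
      have ha : (a : ℕ) < 3 := by simpa using a.isLt
      have hb : (b : ℕ) < 3 := by simpa using b.isLt
      have g1 : ∀ (m : Fin n), ((permList π).get (Fin.cast hlen.symm m)) = (π m : ℕ) := by
        intro m
        rw [permList_get]
        congr 1
      have hvkf : (π ⟨(kf:ℕ), kf.isLt⟩ : ℕ) = v - 1 := by
        have h1 : (⟨(kf:ℕ), kf.isLt⟩ : Fin n) = kf := Fin.ext rfl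
        rw [h1, hkf]
      have hLget : ∀ m : Fin (([1,2,3] : List ℕ).length), ([1,2,3] : List ℕ).get m = (m : ℕ) + 1 := by decide
      rcases show (a:ℕ) = 0 ∨ (a:ℕ) = 1 ∨ (a:ℕ) = 2 by omega with h1|h1|h1 <;>
      rcases show (b:ℕ) = 0 ∨ (b:ℕ) = 1 ∨ (b:ℕ) = 2 by omega with h2|h2|h2 <;>
        simp only [h1, h2, hLget, if_true, if_false, reduceIte] <;>
        simp only [g1] <;> simp [hvkf] <;> omega
  · exact hF i kf (by omega) kf.isLt hik heq hasc

end QLemmas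

section Construction
variable {n : ℕ} [NeZero n]
-- (defs from t3 assumed; here inline for dev)
lemma card_split (T : Finset (Fin n)) : T.card = n - Tᶜ.card ∧ Tᶜ.card ≤ n := by
  have h := Finset.card_add_card_compl T
  simp only [Fintype.card_fin] at h
  omega
def fT (T : Finset (Fin n)) : Fin n → Fin n := fun i =>
  if h : (i : ℕ) < Tᶜ.card then
    Tᶜ.orderEmbOfFin rfl ⟨Tᶜ.card - 1 - i, by omega⟩
  else
    T.orderEmbOfFin (card_split T).1
      ⟨n - 1 - i, by have h1 := (card_split T).2; have h2 := i.isLt; omega⟩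
lemma fT_mem_compl (T : Finset (Fin n)) (i : Fin n) (h : (i:ℕ) < Tᶜ.card) :
    fT T i ∈ Tᶜ := by
  rw [fT, dif_pos h]; exact Finset.orderEmbOfFin_mem _ _ _
lemma fT_mem (T : Finset (Fin n)) (i : Fin n) (h : ¬ (i:ℕ) < Tᶜ.card) :
    fT T i ∈ T := by
  rw [fT, dif_neg h]; exact Finset.orderEmbOfFin_mem _ _ _
lemma fT_inj (T : Finset (Fin n)) : Function.Injective (fT T) := by
  intro i j hij
  by_cases hi : (i:ℕ) < Tᶜ.card <;> by_cases hj : (j:ℕ) < Tᶜ.card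
  · rw [fT, dif_pos hi, fT, dif_pos hj] at hij
    have := (Tᶜ.orderEmbOfFin rfl).injective hij
    simp only [Fin.mk.injEq] at this
    exact Fin.ext (by omega)
  · exact absurd ((fT_mem T j hj)) (by rw [← hij]; simpa using (Finset.mem_compl.1 (fT_mem_compl T i hi)))
  · exact absurd ((fT_mem T i hi)) (by rw [hij]; simpa using (Finset.mem_compl.1 (fT_mem_compl T j hj)))
  · rw [fT, dif_neg hi, fT, dif_neg hj] at hij
    have := (T.orderEmbOfFin (card_split T).1).injective hij
    simp only [Fin.mk.injEq] at this
    have h1 := i.isLt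
    have h2 := j.isLt
    exact Fin.ext (by omega)
noncomputable def piT (T : Finset (Fin n)) : Equiv.Perm (Fin n) :=
  Equiv.ofBijective (fT T) ((Finite.injective_iff_bijective).1 (fT_inj T))
lemma piT_apply (T : Finset (Fin n)) (i : Fin n) : piT T i = fT T i := rfl
lemma fT_desc1 (T : Finset (Fin n)) (i j : Fin n) (hij : i < j) (hj : (j:ℕ) < Tᶜ.card) :
    fT T j < fT T i := by
  have hi : (i:ℕ) < Tᶜ.card := lt_trans hij hj
  simp only [fT]
  rw [dif_pos hi, dif_pos hj]
  apply (Tᶜ.orderEmbOfFin rfl).strictMono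
  have := (Fin.lt_def).1 hij
  exact Fin.mk_lt_mk.mpr (by omega)
lemma fT_desc2 (T : Finset (Fin n)) (i j : Fin n) (hij : i < j) (hi : ¬ (i:ℕ) < Tᶜ.card) :
    fT T j < fT T i := by
  have hj : ¬ (j:ℕ) < Tᶜ.card := by
    have := (Fin.lt_def).1 hij; omega
  simp only [fT]
  rw [dif_neg hi, dif_neg hj]
  apply (T.orderEmbOfFin (card_split T).1).strictMono
  have h1 := (Fin.lt_def).1 hij
  have h2 := j.isLt
  exact Fin.mk_lt_mk.mpr (by omega)
lemma compl_card_pos (T : Finset (Fin n)) (hT0 : (0 : Fin n) ∉ T) : 0 < Tᶜ.card :=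
  Finset.card_pos.2 ⟨0, Finset.mem_compl.2 hT0⟩
lemma fT_zero (T : Finset (Fin n)) (hT0 : (0 : Fin n) ∉ T) (h : Tᶜ.card - 1 < n) :
    fT T ⟨Tᶜ.card - 1, h⟩ = 0 := by
  have h0 : (0:Fin n) ∈ Tᶜ := Finset.mem_compl.2 hT0
  have hpos : 0 < Tᶜ.card := compl_card_pos T hT0
  rw [fT]
  rw [dif_pos (by simp only []; omega)]
  have heq : (⟨Tᶜ.card - 1 - (Tᶜ.card - 1), by omega⟩ : Fin Tᶜ.card) = ⟨0, hpos⟩ := by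
    apply Fin.ext; simp
  rw [heq]
  rw [Finset.orderEmbOfFin_zero rfl hpos]
  apply le_antisymm
  · exact Finset.min'_le _ _ h0
  · exact Fin.zero_le _

-- NEW PART
lemma piT_q (T : Finset (Fin n)) (hT0 : (0 : Fin n) ∉ T) : Qprop (piT T) := by
  intro i h hasc
  set c := Tᶜ.card with hc
  have hle := (card_split T).2
  have hpos : 0 < c := compl_card_pos T hT0
  by_cases h1 : i + 1 < c
  · exfalso
    have := fT_desc1 T ⟨i, by omega⟩ ⟨i+1, h⟩ (Fin.mk_lt_mk.mpr (by omega)) h1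
    rw [piT_apply, piT_apply] at hasc
    have := (Fin.lt_def).1 this
    omega
  · by_cases h2 : i < c
    · -- i = c - 1
      have hi : i = c - 1 := by omega
      rw [piT_apply]
      subst hi
      rw [fT_zero T hT0]
      rfl
    · exfalso
      have := fT_desc2 T ⟨i, by omega⟩ ⟨i+1, h⟩ (Fin.mk_lt_mk.mpr (by omega)) h2
      rw [piT_apply, piT_apply] at hasc
      have := (Fin.lt_def).1 this
      omega

lemma piT_indec (T : Finset (Fin n)) (hT0 : (0 : Fin n) ∉ T)
    (hTI : ∀ j : Fin n, j ≠ 0 → T ≠ Finset.Ici j) : IsIndecomposable (piT T) := by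
  rintro ⟨k, hk0, hkn, hdec⟩
  set c := Tᶜ.card with hc
  have hle := (card_split T).2
  have hpos : 0 < c := compl_card_pos T hT0
  have hkf : k < n := hkn
  -- image of positions < k equals Iio ⟨k⟩
  have himg : (Finset.Iio (⟨k, hkf⟩ : Fin n)).image (piT T) = Finset.Iio ⟨k, hkf⟩ := by
    apply Finset.eq_of_subset_of_card_le
    · intro v hv
      simp only [Finset.mem_image, Finset.mem_Iio] at hv ⊢
      obtain ⟨i, hi, rfl⟩ := hv
      exact (Fin.lt_def).2 (by simpa using hdec i ((Fin.lt_def).1 hi))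
    · rw [Finset.card_image_of_injective _ (piT T).injective]
  -- positions ≥ k have values ≥ k
  have hge : ∀ i : Fin n, ¬ ((i:ℕ) < k) → k ≤ (piT T i : ℕ) := by
    intro i hi
    by_contra hlt
    push_neg at hlt
    have hmem : piT T i ∈ Finset.Iio (⟨k, hkf⟩ : Fin n) :=
      Finset.mem_Iio.2 ((Fin.lt_def).2 (by simpa using hlt))
    rw [← himg] at hmem
    simp only [Finset.mem_image, Finset.mem_Iio] at hmem
    obtain ⟨j, hj, hje⟩ := hmem
    have : j = i := (piT T).injective hje
    subst this
    exact hi ((Fin.lt_def).1 hj)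
  -- c ≤ k since value 0 sits at position c - 1
  have hck : c ≤ k := by
    by_contra hcon
    push_neg at hcon
    have h0 : (piT T ⟨c - 1, by omega⟩ : ℕ) = 0 := by
      rw [piT_apply, fT_zero T hT0]; rfl
    have := hge ⟨c - 1, by omega⟩
    by_cases hx : (c - 1 : ℕ) < k
    · have := hdec ⟨c - 1, by omega⟩ (by simpa using hx)
      omega
    · have := hge ⟨c - 1, by omega⟩ (by simpa using hx)
      omega
  -- c < k impossible
  have hcek : c = k := by
    by_contra hcon
    have hck' : c < k := by omega
    have hd := fT_desc2 T ⟨c, by omega⟩ ⟨k, hkf⟩ (Fin.mk_lt_mk.mpr hck') (by simp [hc])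
    have h1 : (piT T ⟨c, by omega⟩ : ℕ) < k := hdec _ (by simpa using hck')
    have h2 : k ≤ (piT T ⟨k, hkf⟩ : ℕ) := hge _ (by simp)
    rw [piT_apply] at h1 h2
    have := (Fin.lt_def).1 hd
    omega
  -- now T = Ici ⟨k⟩
  have hT : T = Finset.Ici (⟨k, hkf⟩ : Fin n) := by
    apply Finset.eq_of_subset_of_card_le
    · intro v hv
      simp only [Finset.mem_Ici]
      set i := (piT T).symm v with hi
      have hvi : piT T i = v := by simp [hi]
      by_cases hik : (i : ℕ) < k
      · exfalso
        have := fT_mem_compl T i (by omega)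
        rw [← piT_apply, hvi] at this
        exact (Finset.mem_compl.1 this) hv
      · have := hge i hik
        rw [hvi] at this
        exact (Fin.le_def).2 (by simpa using this)
    · rw [Fin.card_Ici]
      have h1 := (card_split T).1
      simp only [] at h1 ⊢
      omega
  exact hTI ⟨k, hkf⟩ (by simp [Fin.ext_iff]; omega) hT


/-- Recover T from a permutation: values positioned after the position of 0. -/
noncomputable def phi (π : Equiv.Perm (Fin n)) : Finset (Fin n) :=
  Finset.univ.filter (fun v => π.symm 0 < π.symm v)

lemma phi_zero_not_mem (π : Equiv.Perm (Fin n)) : (0 : Fin n) ∉ phi π := by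
  simp only [phi, Finset.mem_filter, Finset.mem_univ, true_and]
  exact lt_irrefl _

lemma mem_phi_compl (π : Equiv.Perm (Fin n)) (v : Fin n) :
    v ∈ (phi π)ᶜ ↔ ((π.symm v : Fin n) : ℕ) ≤ ((π.symm 0 : Fin n) : ℕ) := by
  simp only [phi, Finset.mem_compl, Finset.mem_filter, Finset.mem_univ, true_and, not_lt,
    Fin.le_def]

lemma mem_phi (π : Equiv.Perm (Fin n)) (v : Fin n) :
    v ∈ phi π ↔ ((π.symm 0 : Fin n) : ℕ) < ((π.symm v : Fin n) : ℕ) := by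
  simp only [phi, Finset.mem_filter, Finset.mem_univ, true_and, Fin.lt_def]

lemma phi_compl_card (π : Equiv.Perm (Fin n)) :
    (phi π)ᶜ.card = ((π.symm 0 : Fin n) : ℕ) + 1 := by
  have h : (phi π)ᶜ = (Finset.Iic (π.symm 0)).image π := by
    ext v
    rw [mem_phi_compl]
    simp only [Finset.mem_image, Finset.mem_Iic]
    constructor
    · intro hv
      exact ⟨π.symm v, (Fin.le_def).2 hv, by simp⟩
    · rintro ⟨u, hu, rfl⟩
      simpa using (Fin.le_def).1 hu
  rw [h, Finset.card_image_of_injective _ π.injective, Fin.card_Iic]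

lemma phi_card (π : Equiv.Perm (Fin n)) :
    (phi π).card = n - 1 - ((π.symm 0 : Fin n) : ℕ) := by
  have h : phi π = (Finset.Ioi (π.symm 0)).image π := by
    ext v
    rw [mem_phi]
    simp only [Finset.mem_image, Finset.mem_Ioi]
    constructor
    · intro hv
      exact ⟨π.symm v, (Fin.lt_def).2 hv, by simp⟩
    · rintro ⟨u, hu, rfl⟩
      simpa using (Fin.lt_def).1 hu
  rw [h, Finset.card_image_of_injective _ π.injective, Fin.card_Ioi]

lemma phi_piT (T : Finset (Fin n)) (hT0 : (0 : Fin n) ∉ T) : phi (piT T) = T := by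
  have hpos : 0 < Tᶜ.card := compl_card_pos T hT0
  have hle := (card_split T).2
  have hsymm0 : (piT T).symm 0 = ⟨Tᶜ.card - 1, by omega⟩ := by
    apply (piT T).injective
    simp only [Equiv.apply_symm_apply]
    exact (fT_zero T hT0 (by omega)).symm
  ext v
  rw [mem_phi, hsymm0]
  constructor
  · intro hv
    have h1 : ¬ (((piT T).symm v : ℕ) < Tᶜ.card) := by simp at hv; omega
    have := fT_mem T ((piT T).symm v) h1
    rw [← piT_apply] at this
    simpa using this
  · intro hv
    simp only []
    by_contra hcon
    push_neg at hcon
    have h1 : (((piT T).symm v : ℕ)) < Tᶜ.card := by omega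
    have := fT_mem_compl T ((piT T).symm v) h1
    rw [← piT_apply] at this
    simp only [Equiv.apply_symm_apply] at this
    exact (Finset.mem_compl.1 this) hv

/-- Under Qprop: descending outside the zero position. -/
lemma q_anti (π : Equiv.Perm (Fin n)) (hQ : Qprop π)
    (a b : ℕ) (ha : a < n) (hb : b < n) (hab : a < b)
    (hz : ((π.symm 0 : Fin n) : ℕ) < a ∨ b ≤ ((π.symm 0 : Fin n) : ℕ)) :
    (π ⟨b, hb⟩ : ℕ) < (π ⟨a, ha⟩ : ℕ) := by
  by_contra hcon
  push_neg at hcon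
  have hne : (π ⟨a, ha⟩ : ℕ) ≠ (π ⟨b, hb⟩ : ℕ) := by
    intro hc
    have : (⟨a, ha⟩ : Fin n) = ⟨b, hb⟩ := π.injective (Fin.ext hc)
    simp only [Fin.mk.injEq] at this
    omega
  have hlt : (π ⟨a, ha⟩ : ℕ) < (π ⟨b, hb⟩ : ℕ) := by omega
  obtain ⟨m, hm1, hm2, hm3, hm4⟩ := exists_zero π hQ (b - a - 1) a b (by omega) hb hlt
  have : (⟨m, hm3⟩ : Fin n) = π.symm 0 := by
    apply π.injective
    simp only [Equiv.apply_symm_apply]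
    exact Fin.ext hm4
  simp only [Fin.ext_iff] at this
  omega

lemma piT_phi (π : Equiv.Perm (Fin n)) (hQ : Qprop π) : piT (phi π) = π := by
  set j0 : ℕ := ((π.symm 0 : Fin n) : ℕ) with hj0
  have hj0n : j0 < n := (π.symm 0).isLt
  set T : Finset (Fin n) := phi π with hT
  have hc : Tᶜ.card = j0 + 1 := phi_compl_card π
  have hle := (card_split T).2
  apply Equiv.ext
  intro i
  rw [piT_apply, fT]
  by_cases hi : (i : ℕ) < Tᶜ.card
  · rw [dif_pos hi]
    have hg : (fun m : Fin Tᶜ.card => π ⟨j0 - (m:ℕ), by omega⟩)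
        = ⇑(Tᶜ.orderEmbOfFin rfl) := by
      apply Finset.orderEmbOfFin_unique
      · intro x
        rw [mem_phi_compl]
        simp only [Equiv.symm_apply_apply]
        have := x.isLt
        simp
        omega
      · intro m m' hmm
        have h1 := (Fin.lt_def).1 hmm
        have h2 := m'.isLt
        exact q_anti π hQ (j0 - (m':ℕ)) (j0 - (m:ℕ)) (by omega) (by omega) (by omega) (by omega)
    have hgi := congrFun hg ⟨Tᶜ.card - 1 - (i:ℕ), by omega⟩
    rw [← hgi]
    simp only []
    congr 1
    apply Fin.ext
    simp
    omega
  · rw [dif_neg hi]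
    have hg : (fun m : Fin (n - Tᶜ.card) => π ⟨n - 1 - (m:ℕ), by omega⟩)
        = ⇑(T.orderEmbOfFin (card_split T).1) := by
      apply Finset.orderEmbOfFin_unique
      · intro x
        rw [mem_phi]
        simp only [Equiv.symm_apply_apply]
        have := x.isLt
        simp
        omega
      · intro m m' hmm
        have h1 := (Fin.lt_def).1 hmm
        have h2 := m'.isLt
        have h3 := m.isLt
        exact q_anti π hQ (n - 1 - (m':ℕ)) (n - 1 - (m:ℕ)) (by omega) (by omega) (by omega) (by omega)
    have hilt := i.isLt
    have hgi := congrFun hg ⟨n - 1 - (i:ℕ), by omega⟩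
    rw [← hgi]
    simp only []
    congr 1
    apply Fin.ext
    simp
    omega

lemma phi_not_Ici (π : Equiv.Perm (Fin n)) (hI : IsIndecomposable π) :
    ∀ j : Fin n, j ≠ 0 → phi π ≠ Finset.Ici j := by
  intro j hj hEq
  set j0 : ℕ := ((π.symm 0 : Fin n) : ℕ) with hj0
  have hj0n : j0 < n := (π.symm 0).isLt
  have hcard : n - 1 - j0 = n - (j:ℕ) := by
    rw [← phi_card π, hEq, Fin.card_Ici]
  have hjpos : 0 < (j:ℕ) := by
    rcases Nat.eq_zero_or_pos (j:ℕ) with h | h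
    · exact absurd (Fin.ext h) hj
    · exact h
  have hjn : (j:ℕ) < n := j.isLt
  have hkey : (j:ℕ) = j0 + 1 := by omega
  apply hI
  refine ⟨(j:ℕ), hjpos, hjn, ?_⟩
  intro i hik
  have hi : (i:ℕ) ≤ j0 := by omega
  have hmem : π i ∉ phi π := by
    rw [mem_phi]
    simp only [Equiv.symm_apply_apply]
    omega
  rw [hEq] at hmem
  simp only [Finset.mem_Ici, not_le, Fin.lt_def] at hmem
  omega

end Construction

section Count
variable {n : ℕ} [NeZero n]

def Fpred (T : Finset (Fin n)) : Prop :=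
  (0:Fin n) ∉ T ∧ ∀ j : Fin n, j ≠ 0 → T ≠ Finset.Ici j

lemma Ici_inj_fin : Function.Injective (fun j : Fin n => Finset.Ici j) := by
  intro j j' h
  simp only at h
  have h1 : j' ≤ j := Finset.mem_Ici.1 (h ▸ Finset.mem_Ici.2 (le_refl j))
  have h2 : j ≤ j' := Finset.mem_Ici.1 (h.symm ▸ Finset.mem_Ici.2 (le_refl j'))
  exact le_antisymm h2 h1

lemma count_F (hn : 1 < n) :
    Nat.card {T : Finset (Fin n) // Fpred T} = 2 ^ (n - 1) - (n - 1) := by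
  classical
  set A : Finset (Finset (Fin n)) := ({0}ᶜ : Finset (Fin n)).powerset with hA
  set B : Finset (Finset (Fin n)) :=
    (Finset.univ.filter (fun j : Fin n => j ≠ 0)).image (fun j => Finset.Ici j) with hB
  have hmemA : ∀ T : Finset (Fin n), T ∈ A ↔ (0:Fin n) ∉ T := by
    intro T
    simp only [hA, Finset.mem_powerset, Finset.subset_iff, Finset.mem_compl,
      Finset.mem_singleton]
    constructor
    · intro h h0
      exact h h0 rfl
    · intro h x hx hx0
      exact h (hx0 ▸ hx)
  have hmemB : ∀ T : Finset (Fin n), T ∈ B ↔ ∃ j : Fin n, j ≠ 0 ∧ T = Finset.Ici j := by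
    intro T
    simp only [hB, Finset.mem_image, Finset.mem_filter, Finset.mem_univ, true_and]
    constructor
    · rintro ⟨j, hj, rfl⟩; exact ⟨j, hj, rfl⟩
    · rintro ⟨j, hj, rfl⟩; exact ⟨j, hj, rfl⟩
  have hiff : ∀ T : Finset (Fin n), Fpred T ↔ T ∈ A \ B := by
    intro T
    rw [Finset.mem_sdiff, hmemA, hmemB]
    constructor
    · rintro ⟨h0, hI⟩
      exact ⟨h0, by rintro ⟨j, hj, rfl⟩; exact hI j hj rfl⟩
    · rintro ⟨h0, hI⟩
      exact ⟨h0, fun j hj hEq => hI ⟨j, hj, hEq⟩⟩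
  have hBA : B ⊆ A := by
    intro T hT
    rw [hmemB] at hT
    obtain ⟨j, hj, rfl⟩ := hT
    rw [hmemA]
    simp only [Finset.mem_Ici]
    intro h
    exact hj (le_antisymm (by exact h) (Fin.zero_le j))
  have hcA : A.card = 2 ^ (n - 1) := by
    rw [hA, Finset.card_powerset, Finset.card_compl, Finset.card_singleton, Fintype.card_fin]
  have hcB : B.card = n - 1 := by
    rw [hB, Finset.card_image_of_injective _ Ici_inj_fin]
    rw [Finset.filter_ne']
    rw [Finset.card_erase_of_mem (Finset.mem_univ _)]
    simp
  have hcard : (A \ B).card = 2 ^ (n - 1) - (n - 1) := by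
    rw [Finset.card_sdiff_of_subset hBA, hcA, hcB]
  rw [← hcard]
  rw [Nat.card_congr (Equiv.subtypeEquivRight hiff)]
  rw [Nat.card_eq_fintype_card]
  exact Fintype.card_coe _
end Count

theorem stmt10 (n : ℕ) (hn : 1 < n) :
    Nat.card {π : Equiv.Perm (Fin n) //
        IsIndecomposable π ∧ IsFishburn π ∧ AvoidsPat π [1, 2, 3]} =
      2 ^ (n - 1) - (n - 1) := by
  haveI : NeZero n := ⟨by omega⟩
  set g : {T : Finset (Fin n) // Fpred T} →
      {π : Equiv.Perm (Fin n) //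
        IsIndecomposable π ∧ IsFishburn π ∧ AvoidsPat π [1, 2, 3]} :=
    fun T => ⟨piT T.1, piT_indec T.1 T.2.1 T.2.2,
      q_fishburn (piT T.1) (piT_q T.1 T.2.1), q_avoids (piT T.1) (piT_q T.1 T.2.1)⟩ with hg
  have hbij : Function.Bijective g := by
    constructor
    · intro T T' h
      have h1 : piT T.1 = piT T'.1 := congrArg Subtype.val h
      have h2 : phi (piT T.1) = phi (piT T'.1) := congrArg phi h1
      rw [phi_piT T.1 T.2.1, phi_piT T'.1 T'.2.1] at h2
      exact Subtype.ext h2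
    · rintro ⟨π, hI, hF, hA⟩
      have hQ := fishburn_avoids_q π hF hA
      refine ⟨⟨phi π, phi_zero_not_mem π, phi_not_Ici π hI⟩, ?_⟩
      exact Subtype.ext (piT_phi π hQ)
  calc Nat.card {π : Equiv.Perm (Fin n) //
        IsIndecomposable π ∧ IsFishburn π ∧ AvoidsPat π [1, 2, 3]}
      = Nat.card {T : Finset (Fin n) // Fpred T} := (Nat.card_eq_of_bijective g hbij).symm
    _ = 2 ^ (n - 1) - (n - 1) := count_F hn
end

section
/- For n > 1, the number of indecomposable Fishburn permutations of size n avoiding the classical pattern 213 is 2^{n−2}. -/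
open Finset

namespace Stmt12

def T (b : ℕ → Bool) (i : ℕ) : ℕ := ((Finset.range i).filter (fun j => b j = true)).card

lemma T_succ (b : ℕ → Bool) (i : ℕ) :
    T b (i+1) = T b i + (if b i then 1 else 0) := by
  unfold T
  rw [Finset.range_add_one, Finset.filter_insert]
  by_cases hb : b i = true
  · rw [if_pos hb, Finset.card_insert_of_notMem (by simp), if_pos hb]
  · rw [if_neg hb, if_neg hb]; omega

lemma T_le (b : ℕ → Bool) (i : ℕ) : T b i ≤ i := by
  calc T b i ≤ (Finset.range i).card := Finset.card_filter_le _ _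
  _ = i := Finset.card_range i

lemma T_mono (b : ℕ → Bool) {i j : ℕ} (h : i ≤ j) : T b i ≤ T b j :=
  Finset.card_le_card (Finset.filter_subset_filter _ (by simpa using Finset.range_subset_range.2 h))

lemma T_sub_le (b : ℕ → Bool) {i j : ℕ} (h : i ≤ j) : T b j ≤ T b i + (j - i) := by
  induction j with
  | zero =>
    have : i = 0 := by omega
    subst this; omega
  | succ j ih =>
    rcases Nat.lt_or_ge i (j+1) with hlt | hge
    · have := ih (by omega)
      rw [T_succ]
      split <;> omega
    · have : i = j + 1 := by omega
      subst this; omega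

lemma T_lt_of_true (b : ℕ → Bool) {i j : ℕ} (h : i < j) (hb : b i = true) :
    T b i < T b j := by
  have h1 : T b i + 1 ≤ T b (i+1) := by rw [T_succ, hb]; simp
  have := T_mono b (show i + 1 ≤ j by omega)
  omega

lemma T_le_of_false (b : ℕ → Bool) {i j : ℕ} (h : i < j) (hb : b i = false) :
    T b j + 1 ≤ T b i + (j - i) := by
  have h1 : T b (i+1) = T b i := by rw [T_succ, hb]; simp
  have := T_sub_le b (show i + 1 ≤ j by omega)
  omega

def g (n : ℕ) (b : ℕ → Bool) (i : ℕ) : ℕ := if b i then n - 1 - T b i else i - T b i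

lemma g_lt (n : ℕ) (b : ℕ → Bool) (i : ℕ) (hi : i < n) : g n b i < n := by
  have := T_le b i
  unfold g; split <;> omega

/-- key: value at a `true` position dominates all later values. -/
lemma g_max {n : ℕ} (b : ℕ → Bool) {i j : ℕ} (hij : i < j) (hj : j < n)
    (hb : b i = true) : g n b j < g n b i := by
  have hTi := T_le b i
  have hTj := T_le b j
  have h1 := T_lt_of_true b hij hb
  simp only [g, hb, if_true]
  split <;> omega

lemma g_min {n : ℕ} (b : ℕ → Bool) {i j : ℕ} (hij : i < j) (hj : j < n)
    (hb : b i = false) : g n b i < g n b j := by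
  have hTi := T_le b i
  have hTj := T_le b j
  have h1 := T_le_of_false b hij hb
  have h2 := T_mono b (le_of_lt hij)
  simp only [g, hb, if_false, Bool.false_eq_true]
  split <;> omega

lemma g_inj {n : ℕ} (b : ℕ → Bool) : Function.Injective
    (fun i : Fin n => (⟨g n b i, g_lt n b i i.2⟩ : Fin n)) := by
  intro i j h
  simp only [Fin.mk.injEq] at h
  by_contra hne
  rcases Fin.lt_or_lt_of_ne hne with hlt | hlt
  · rcases hb : b (i : ℕ) with hf | ht
    · exact absurd h (by have := g_min (n := n) b hlt j.2 hb; omega)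
    · exact absurd h (by have := g_max (n := n) b hlt j.2 hb; omega)
  · rcases hb : b (j : ℕ) with hf | ht
    · exact absurd h (by have := g_min (n := n) b hlt i.2 hb; omega)
    · exact absurd h (by have := g_max (n := n) b hlt i.2 hb; omega)

noncomputable def gperm (n : ℕ) (b : ℕ → Bool) : Equiv.Perm (Fin n) :=
  Equiv.ofBijective _ ((Finite.injective_iff_bijective).1 (g_inj (n := n) b))

lemma gperm_apply (n : ℕ) (b : ℕ → Bool) (i : Fin n) :
    (gperm n b i : ℕ) = g n b i := rfl


lemma permList_length {n : ℕ} (π : Equiv.Perm (Fin n)) : (permList π).length = n := by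
  simp [permList]

lemma permList_getElem {n : ℕ} (π : Equiv.Perm (Fin n)) (i : ℕ)
    (h2 : i < (permList π).length) :
    (permList π)[i] = (π ⟨i, by simpa [permList] using h2⟩ : ℕ) := by
  simp [permList]

lemma permList_get {n : ℕ} (π : Equiv.Perm (Fin n)) (x : Fin (permList π).length) :
    (permList π).get x = (π ⟨(x : ℕ), by have := x.2; simpa [permList] using this⟩ : ℕ) := by
  rw [List.get_eq_getElem, permList_getElem]

def No213 {n : ℕ} (π : Equiv.Perm (Fin n)) : Prop :=
  ∀ a b c : Fin n, a < b → b < c → (π b : ℕ) < π a → (π a : ℕ) < π c → False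

def No231 {n : ℕ} (π : Equiv.Perm (Fin n)) : Prop :=
  ∀ a b c : Fin n, a < b → b < c → (π c : ℕ) < π a → (π a : ℕ) < π b → False

lemma no213_of_avoids {n : ℕ} (π : Equiv.Perm (Fin n)) (h : AvoidsPat π [2, 1, 3]) :
    No213 π := by
  intro a b c hab hbc h1 h2
  apply h
  have hl := permList_length π
  have ha := a.2; have hb := b.2; have hc := c.2
  refine ⟨fun x => ⟨if (x : ℕ) = 0 then (a : ℕ) else if (x : ℕ) = 1 then (b : ℕ) else (c : ℕ),
    by split; · omega
       split <;> omega⟩, ?_, ?_⟩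
  · intro x y hxy
    have hx : (x : ℕ) < 3 := x.2
    have hy : (y : ℕ) < 3 := y.2
    rw [Fin.lt_def] at hxy ⊢
    have hx3 : (x:ℕ) = 0 ∨ (x:ℕ) = 1 ∨ (x:ℕ) = 2 := by omega
    have hy3 : (y:ℕ) = 0 ∨ (y:ℕ) = 1 ∨ (y:ℕ) = 2 := by omega
    rcases hx3 with h'|h'|h' <;> rcases hy3 with h''|h''|h'' <;>
      simp only [h', h''] <;> norm_num <;> rw [Fin.lt_def] at hab hbc <;> omega
  · intro x y
    have hx : (x : ℕ) < 3 := x.2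
    have hy : (y : ℕ) < 3 := y.2
    have hx3 : (x:ℕ) = 0 ∨ (x:ℕ) = 1 ∨ (x:ℕ) = 2 := by omega
    have hy3 : (y:ℕ) = 0 ∨ (y:ℕ) = 1 ∨ (y:ℕ) = 2 := by omega
    have hgx : [2,1,3].get x = [2,1,3].get ⟨(x:ℕ), hx⟩ := rfl
    have hgy : [2,1,3].get y = [2,1,3].get ⟨(y:ℕ), hy⟩ := rfl
    rw [hgx, hgy, permList_get, permList_get]
    rcases hx3 with h'|h'|h' <;> rcases hy3 with h''|h''|h'' <;>
      simp only [h'', h'] <;> norm_num <;> (try simp only [Fin.eta]) <;> omega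

lemma triple_of_contains {n : ℕ} (π : Equiv.Perm (Fin n))
    (h : SeqContains (permList π) [2, 1, 3]) :
    ∃ a b c : Fin n, a < b ∧ b < c ∧ (π b : ℕ) < π a ∧ (π a : ℕ) < π c := by
  obtain ⟨f, hf, hiff⟩ := h
  have hl := permList_length π
  have h0 : ((f ⟨0, by norm_num⟩ : Fin _) : ℕ) < n := by
    have := (f ⟨0, by norm_num⟩).2; omega
  have h1 : ((f ⟨1, by norm_num⟩ : Fin _) : ℕ) < n := by
    have := (f ⟨1, by norm_num⟩).2; omega
  have h2 : ((f ⟨2, by norm_num⟩ : Fin _) : ℕ) < n := by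
    have := (f ⟨2, by norm_num⟩).2; omega
  refine ⟨⟨_, h0⟩, ⟨_, h1⟩, ⟨_, h2⟩, ?_, ?_, ?_, ?_⟩
  · exact hf (show (⟨0, by norm_num⟩ : Fin [2,1,3].length) < ⟨1, by norm_num⟩ from by
      rw [Fin.lt_def]; norm_num)
  · exact hf (show (⟨1, by norm_num⟩ : Fin [2,1,3].length) < ⟨2, by norm_num⟩ from by
      rw [Fin.lt_def]; norm_num)
  · have := (hiff ⟨1, by norm_num⟩ ⟨0, by norm_num⟩).1 (by norm_num [List.get])
    rw [permList_get, permList_get] at this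
    exact this
  · have := (hiff ⟨0, by norm_num⟩ ⟨2, by norm_num⟩).1 (by norm_num [List.get])
    rw [permList_get, permList_get] at this
    exact this


def MinMax {n : ℕ} (π : Equiv.Perm (Fin n)) : Prop :=
  ∀ i : Fin n, (∀ j, i < j → (π j : ℕ) < π i) ∨ (∀ j, i < j → (π i : ℕ) < π j)

lemma flt_mk_var {n i : ℕ} {hi : i < n} {j : Fin n} (h : i < (j : ℕ)) :
    (⟨i, hi⟩ : Fin n) < j := h

lemma flt_var_mk {n j : ℕ} {hj : j < n} {i : Fin n} (h : (i : ℕ) < j) :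
    i < (⟨j, hj⟩ : Fin n) := h

lemma avoids_of_no213 {n : ℕ} {π : Equiv.Perm (Fin n)} (h : No213 π) :
    AvoidsPat π [2, 1, 3] := by
  intro hcon
  obtain ⟨a, b, c, hab, hbc, h1, h2⟩ := triple_of_contains π hcon
  exact h a b c hab hbc h1 h2

lemma no213_of_minmax {n : ℕ} {π : Equiv.Perm (Fin n)} (h : MinMax π) : No213 π := by
  intro a b c hab hbc h1 h2
  rcases h a with ha | ha
  · exact absurd (ha c (hab.trans hbc)) (by omega)
  · exact absurd (ha b hab) (by omega)

lemma fishburn_of_minmax {n : ℕ} {π : Equiv.Perm (Fin n)} (h : MinMax π) :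
    IsFishburn π := by
  intro i k hi hk hik heq hlt
  rcases h ⟨i, hi⟩ with hm | hm
  · exact absurd hlt (not_lt.2 (le_of_lt (hm ⟨i + 1, by omega⟩ (Fin.mk_lt_mk.2 (by omega)))))
  · have := hm ⟨k, hk⟩ (Fin.mk_lt_mk.2 hik)
    omega

lemma no231_of {n : ℕ} {π : Equiv.Perm (Fin n)} (hF : IsFishburn π) (h213 : No213 π) :
    No231 π := by
  suffices H : ∀ a : ℕ, ∀ i j k : Fin n, i < j → j < k → (π k : ℕ) < π i →
      (π i : ℕ) < π j → (π i : ℕ) = a → False by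
    intro i j k hij hjk h1 h2
    exact H _ i j k hij hjk h1 h2 rfl
  intro a
  induction a using Nat.strong_induction_on with
  | _ a IH =>
    intro i j k hij hjk h1 h2 ha
    have ha1 : 1 ≤ a := by omega
    have han : a - 1 < n := by have := (π i).2; omega
    set p := π.symm ⟨a - 1, han⟩ with hp
    have hπp : (π p : ℕ) = a - 1 := by rw [hp, Equiv.apply_symm_apply]
    by_cases hpj : p < j
    · have hpk : p < k := hpj.trans hjk
      have hne : (π k : ℕ) ≠ a - 1 := by
        intro h
        have heq2 : π k = π p := Fin.ext (by omega)
        exact (ne_of_gt hpk) (π.injective heq2)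
      exact IH (a - 1) (by omega) p j k hpj hjk (by omega) (by omega) hπp
    · have hpj' : p ≠ j := by
        intro h
        rw [h] at hπp
        omega
      have hjp : (j : ℕ) < (p : ℕ) := by
        have h1' : ¬ ((p : ℕ) < (j : ℕ)) := fun hh => hpj (Fin.lt_def.2 hh)
        have h2' : (p : ℕ) ≠ (j : ℕ) := fun hh => hpj' (Fin.ext hh)
        omega
      have hip : (i : ℕ) < (p : ℕ) := by
        have := Fin.lt_def.1 hij
        omega
      have hF' := hF (i : ℕ) (p : ℕ) i.2 p.2 hip
      simp only [Fin.eta] at hF'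
      have hF'' := hF' (by omega)
      have hi1n : (i : ℕ) + 1 < n := by have := p.2; omega
      have hdesc : (π ⟨(i : ℕ) + 1, hi1n⟩ : ℕ) < π i := by
        have hne2 : (π ⟨(i : ℕ) + 1, hi1n⟩ : ℕ) ≠ (π i : ℕ) := by
          intro hh
          have : (⟨(i : ℕ) + 1, hi1n⟩ : Fin n) = i := π.injective (Fin.ext hh)
          have := congrArg Fin.val this
          simp at this
        omega
      by_cases hj1 : (i : ℕ) + 1 = (j : ℕ)
      · have : (⟨(i : ℕ) + 1, hi1n⟩ : Fin n) = j := Fin.ext hj1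
        rw [this] at hdesc
        omega
      · have h1j : (i : ℕ) + 1 < (j : ℕ) := by
          have := Fin.lt_def.1 hij
          omega
        exact h213 i ⟨(i : ℕ) + 1, hi1n⟩ j (flt_var_mk (by omega))
          (flt_mk_var h1j) hdesc h2

lemma minmax_of {n : ℕ} {π : Equiv.Perm (Fin n)} (h213 : No213 π) (h231 : No231 π) :
    MinMax π := by
  intro i
  by_contra hc
  push_neg at hc
  obtain ⟨⟨j, hji, hj⟩, ⟨k, hki, hk⟩⟩ := hc
  have hjne : (π i : ℕ) ≠ (π j : ℕ) := by
    intro hh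
    exact (ne_of_lt hji) (π.injective (Fin.ext hh.symm)).symm
  have hkne : (π i : ℕ) ≠ (π k : ℕ) := by
    intro hh
    exact (ne_of_lt hki) (π.injective (Fin.ext hh.symm)).symm
  have hij' : (π i : ℕ) < π j := by omega
  have hik' : (π k : ℕ) < π i := by omega
  rcases lt_trichotomy (j : ℕ) (k : ℕ) with h | h | h
  · exact h231 i j k hji (Fin.lt_def.2 h) hik' hij'
  · have : j = k := Fin.ext h
    subst this
    omega
  · exact h213 i k j hki (Fin.lt_def.2 h) hik' hij'

lemma pi_zero {n : ℕ} {π : Equiv.Perm (Fin n)} (hmm : MinMax π)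
    (hind : IsIndecomposable π) (hn : 1 < n) (h0 : 0 < n) :
    (π ⟨0, h0⟩ : ℕ) = n - 1 := by
  rcases hmm ⟨0, h0⟩ with hmax | hmin
  · by_contra hne
    have hlt : (π ⟨0, h0⟩ : ℕ) < n - 1 := by have := (π ⟨0, h0⟩).2; omega
    set t := π.symm ⟨n - 1, by omega⟩ with htdef
    have ht : (π t : ℕ) = n - 1 := by rw [htdef, Equiv.apply_symm_apply]
    have htne : (t : ℕ) ≠ 0 := by
      intro h
      have : t = ⟨0, h0⟩ := Fin.ext h
      rw [this] at ht
      omega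
    have := hmax t (flt_mk_var (by omega))
    omega
  · exfalso
    apply hind
    refine ⟨1, one_pos, hn, ?_⟩
    intro x hx
    have hx0 : x = ⟨0, h0⟩ := Fin.ext (show (x:ℕ) = 0 by omega)
    subst hx0
    set s := π.symm ⟨0, by omega⟩ with hsdef
    have hs : (π s : ℕ) = 0 := by rw [hsdef, Equiv.apply_symm_apply]
    by_cases hs0 : (s : ℕ) = 0
    · have : s = ⟨0, h0⟩ := Fin.ext hs0
      rw [← this]
      omega
    · have := hmin s (flt_mk_var (by omega))
      omega

lemma perm_eq {n : ℕ} (π σ : Equiv.Perm (Fin n)) (hπ : MinMax π) (hσ : MinMax σ)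
    (h0 : ∀ h0n : 0 < n, π ⟨0, h0n⟩ = σ ⟨0, h0n⟩)
    (hd : ∀ i : ℕ, ∀ h2 : i + 2 < n,
      ((π ⟨i + 2, h2⟩ : ℕ) < π ⟨i + 1, by omega⟩ ↔ (σ ⟨i + 2, h2⟩ : ℕ) < σ ⟨i + 1, by omega⟩)) :
    π = σ := by
  have key : ∀ i : ℕ, ∀ hi : i < n, π ⟨i, hi⟩ = σ ⟨i, hi⟩ := by
    intro i
    induction i using Nat.strong_induction_on with
    | _ i IH =>
      intro hi
      rcases Nat.eq_zero_or_pos i with rfl | hipos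
      · exact h0 hi
      by_contra hne
      have hgt : ∀ τ ρ : Equiv.Perm (Fin n),
          (∀ j, ∀ hj : j < n, j < i → τ ⟨j, hj⟩ = ρ ⟨j, hj⟩) →
          τ ⟨i, hi⟩ ≠ ρ ⟨i, hi⟩ → i < (ρ.symm (τ ⟨i, hi⟩) : ℕ) := by
        intro τ ρ hIH hne'
        set j := ρ.symm (τ ⟨i, hi⟩) with hjdef
        have hρj : ρ j = τ ⟨i, hi⟩ := by rw [hjdef, Equiv.apply_symm_apply]
        rcases lt_trichotomy (j : ℕ) i with h | h | h
        · exfalso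
          have h1 := hIH (j : ℕ) j.2 h
          simp only [Fin.eta] at h1
          rw [hρj] at h1
          have := π.injective -- dummy
          have : (⟨i, hi⟩ : Fin n) = j := τ.injective h1.symm
          have := congrArg Fin.val this
          simp at this
          omega
        · exfalso
          have : j = ⟨i, hi⟩ := Fin.ext h
          rw [this] at hρj
          exact hne' hρj.symm
        · exact h
      have hj := hgt π σ (fun j hj hlt => IH j hlt hj) hne
      have hj' := hgt σ π (fun j hj hlt => (IH j hlt hj).symm) (Ne.symm hne)
      set j := σ.symm (π ⟨i, hi⟩) with hjdef
      set j' := π.symm (σ ⟨i, hi⟩) with hj'def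
      have hσj : (σ j : ℕ) = π ⟨i, hi⟩ := by rw [hjdef, Equiv.apply_symm_apply]
      have hπj' : (π j' : ℕ) = σ ⟨i, hi⟩ := by rw [hj'def, Equiv.apply_symm_apply]
      have hi1 : i + 1 < n := by have := j.2; omega
      have hdtransfer := hd (i - 1) (by omega)
      have e2 : (⟨i - 1 + 2, by omega⟩ : Fin n) = ⟨i + 1, hi1⟩ := Fin.ext (show i - 1 + 2 = i + 1 by omega)
      have e1 : (⟨i - 1 + 1, by omega⟩ : Fin n) = ⟨i, hi⟩ := Fin.ext (show i - 1 + 1 = i by omega)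
      rw [e2, e1] at hdtransfer
      have hlt1 : (⟨i, hi⟩ : Fin n) < ⟨i + 1, hi1⟩ := Fin.mk_lt_mk.2 (by omega)
      rcases hπ ⟨i, hi⟩ with hmax | hmin
      · have hπd : (π ⟨i + 1, hi1⟩ : ℕ) < π ⟨i, hi⟩ := hmax _ hlt1
        have hσd : (σ ⟨i + 1, hi1⟩ : ℕ) < σ ⟨i, hi⟩ := hdtransfer.1 hπd
        have hσmax : (σ j : ℕ) < σ ⟨i, hi⟩ := by
          rcases hσ ⟨i, hi⟩ with h | h
          · exact h j (flt_mk_var (by omega))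
          · exact absurd (h ⟨i + 1, hi1⟩ hlt1) (by omega)
        have hπmax : (π j' : ℕ) < π ⟨i, hi⟩ := hmax j' (flt_mk_var (by omega))
        omega
      · have hπd : (π ⟨i, hi⟩ : ℕ) < π ⟨i + 1, hi1⟩ := hmin _ hlt1
        have hσd : (σ ⟨i, hi⟩ : ℕ) < σ ⟨i + 1, hi1⟩ := by
          by_contra hc
          have : (σ ⟨i + 1, hi1⟩ : ℕ) < σ ⟨i, hi⟩ := by
            have hne2 : (σ ⟨i + 1, hi1⟩ : ℕ) ≠ σ ⟨i, hi⟩ := by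
              intro hh
              have : (⟨i + 1, hi1⟩ : Fin n) = ⟨i, hi⟩ := σ.injective (Fin.ext hh)
              have := congrArg Fin.val this
              simp at this
            omega
          exact absurd (hdtransfer.2 this) (by omega)
        have hσmin : (σ ⟨i, hi⟩ : ℕ) < σ j := by
          rcases hσ ⟨i, hi⟩ with h | h
          · exact absurd (h ⟨i + 1, hi1⟩ hlt1) (by omega)
          · exact h j (flt_mk_var (by omega))
        have hπmin : (π ⟨i, hi⟩ : ℕ) < π j' := hmin j' (flt_mk_var (by omega))
        omega
  apply Equiv.ext
  intro x
  have := key (x : ℕ) x.2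
  simpa only [Fin.eta] using this


lemma gperm_minmax (n : ℕ) (b : ℕ → Bool) : MinMax (gperm n b) := by
  intro i
  cases hb : b (i : ℕ)
  · right
    intro j hij
    exact g_min (n := n) b (show (i : ℕ) < j from hij) j.2 hb
  · left
    intro j hij
    exact g_max (n := n) b (show (i : ℕ) < j from hij) j.2 hb

lemma g_zero {n : ℕ} (b : ℕ → Bool) (hb : b 0 = true) : g n b 0 = n - 1 := by
  simp [g, hb, T]

def bfun (n : ℕ) (c : Fin (n - 2) → Bool) : ℕ → Bool := fun i =>
  if i = 0 then true
  else if h : i - 1 < n - 2 then c ⟨i - 1, h⟩ else false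

lemma bfun_zero (n : ℕ) (c : Fin (n - 2) → Bool) : bfun n c 0 = true := rfl

lemma bfun_succ (n : ℕ) (c : Fin (n - 2) → Bool) (i : ℕ) (h : i < n - 2) :
    bfun n c (i + 1) = c ⟨i, h⟩ := by
  simp only [bfun, Nat.add_sub_cancel]
  rw [if_neg (by omega), dif_pos h]

end Stmt12

open Stmt12

theorem stmt12 (n : ℕ) (hn : 1 < n) :
    Nat.card {π : Equiv.Perm (Fin n) //
        IsIndecomposable π ∧ IsFishburn π ∧ AvoidsPat π [2, 1, 3]} =
      2 ^ (n - 2) := by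
  classical
  have h0n : 0 < n := by omega
  set S := {π : Equiv.Perm (Fin n) //
      IsIndecomposable π ∧ IsFishburn π ∧ AvoidsPat π [2, 1, 3]} with hS
  have hg0 : ∀ c : Fin (n - 2) → Bool,
      (gperm n (bfun n c) ⟨0, h0n⟩ : ℕ) = n - 1 := fun c =>
    g_zero (bfun n c) (bfun_zero n c)
  have hbit : ∀ (c : Fin (n - 2) → Bool) (i : ℕ) (h2 : i + 2 < n),
      ((gperm n (bfun n c) ⟨i + 2, h2⟩ : ℕ) < gperm n (bfun n c) ⟨i + 1, by omega⟩ ↔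
        bfun n c (i + 1) = true) := by
    intro c i h2
    cases hb : bfun n c (i + 1)
    · simp only [Bool.false_eq_true, iff_false, not_lt]
      exact le_of_lt (g_min (n := n) (bfun n c) (show i + 1 < i + 2 by omega) h2 hb)
    · simp only [iff_true]
      exact g_max (n := n) (bfun n c) (show i + 1 < i + 2 by omega) h2 hb
  have hindg : ∀ c : Fin (n - 2) → Bool, IsIndecomposable (gperm n (bfun n c)) := by
    rintro c ⟨k, hk0, hkn, hall⟩
    have h1 := hall ⟨0, h0n⟩ hk0
    have h2 := hg0 c
    omega
  let F : S → (Fin (n - 2) → Bool) := fun s i =>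
    decide ((s.1 ⟨(i : ℕ) + 2, by have := i.2; omega⟩ : ℕ) <
      s.1 ⟨(i : ℕ) + 1, by have := i.2; omega⟩)
  let G : (Fin (n - 2) → Bool) → S := fun c =>
    ⟨gperm n (bfun n c), hindg c, fishburn_of_minmax (gperm_minmax n (bfun n c)),
      avoids_of_no213 (no213_of_minmax (gperm_minmax n (bfun n c)))⟩
  have hFG : ∀ c, F (G c) = c := by
    intro c
    funext i
    have hb := bfun_succ n c (i : ℕ) i.2
    have := hbit c (i : ℕ) (by have := i.2; omega)
    show decide _ = c i
    rw [← hb]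
    cases hbc : bfun n c ((i : ℕ) + 1)
    · rw [decide_eq_false]
      intro hcon
      exact absurd (this.1 hcon) (by rw [hbc]; simp)
    · rw [decide_eq_true]
      exact this.2 hbc
  have hGF : ∀ s, G (F s) = s := by
    intro s
    obtain ⟨π, hind, hfish, havoid⟩ := s
    have h213 := no213_of_avoids π havoid
    have h231 := no231_of hfish h213
    have hmm := minmax_of h213 h231
    apply Subtype.ext
    show gperm n (bfun n (F ⟨π, hind, hfish, havoid⟩)) = π
    set c := F ⟨π, hind, hfish, havoid⟩ with hc
    apply perm_eq _ _ (gperm_minmax n (bfun n c)) hmm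
    · intro h0n'
      apply Fin.ext
      have e1 : (gperm n (bfun n c) ⟨0, h0n'⟩ : ℕ) = n - 1 := hg0 c
      have e2 : (π ⟨0, h0n'⟩ : ℕ) = n - 1 := pi_zero hmm hind hn h0n'
      omega
    · intro i h2
      have hb : bfun n c (i + 1) = c ⟨i, by omega⟩ := bfun_succ n c i (by omega)
      have hcval : c ⟨i, by omega⟩ = decide ((π ⟨i + 2, by omega⟩ : ℕ) < π ⟨i + 1, by omega⟩) := rfl
      have hiff : bfun n c (i + 1) = true ↔ ((π ⟨i + 2, h2⟩ : ℕ) < π ⟨i + 1, by omega⟩) := by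
        rw [hb, hcval]
        exact decide_eq_true_iff
      exact (hbit c i h2).trans hiff
  have hcard : Nat.card S = Nat.card (Fin (n - 2) → Bool) :=
    Nat.card_congr ⟨F, G, hGF, hFG⟩
  rw [hcard]
  simp [Nat.card_eq_fintype_card]
end

section
/- The number of indecomposable Fishburn permutations of size n avoiding the classical pattern 3142 equals the Catalan number C_{n−1}. -/
open Finset

namespace S19


/-- sublist form of containing 231 -/
def Pat231 (w : List ℕ) : Prop := ∃ a b c : ℕ, List.Sublist [b, c, a] w ∧ a < b ∧ b < c

/-- index form of containing 231 -/
def I231 (w : List ℕ) : Prop :=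
  ∃ (i j k : ℕ) (hij : i < j) (hjk : j < k) (hk : k < w.length),
    w[k] < w[i]'(by omega) ∧ w[i]'(by omega) < w[j]'(by omega)

lemma pair_sublist (w : List ℕ) (i j : ℕ) (hij : i < j) (hj : j < w.length) :
    List.Sublist [w[i]'(by omega), w[j]] w := by
  have h1 : List.Sublist [w[i]'(by omega)] (w.take (i+1)) := by
    rw [List.singleton_sublist]
    have : (w.take (i+1))[i]'(by simp; omega) = w[i]'(by omega) := List.getElem_take ..
    rw [← this]; exact List.getElem_mem _
  have h2 : List.Sublist [w[j]] (w.drop (i+1)) := by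
    rw [List.singleton_sublist]
    have : (w.drop (i+1))[j - (i+1)]'(by simp; omega) = w[j]'(by omega) := by
      rw [List.getElem_drop]; congr 1; omega
    rw [← this]; exact List.getElem_mem _
  have := List.Sublist.append h1 h2
  rwa [List.take_append_drop] at this

lemma triple_sublist (w : List ℕ) (i j k : ℕ) (hij : i < j) (hjk : j < k) (hk : k < w.length) :
    List.Sublist [w[i]'(by omega), w[j]'(by omega), w[k]] w := by
  have h1 : List.Sublist [w[i]'(by omega)] (w.take (i+1)) := by
    rw [List.singleton_sublist]
    have : (w.take (i+1))[i]'(by simp; omega) = w[i]'(by omega) := List.getElem_take ..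
    rw [← this]; exact List.getElem_mem _
  have h2 : List.Sublist [w[j]'(by omega), w[k]] (w.drop (i+1)) := by
    have e1 : (w.drop (i+1))[j - (i+1)]'(by simp; omega) = w[j]'(by omega) := by
      rw [List.getElem_drop]; congr 1; omega
    have e2 : (w.drop (i+1))[k - (i+1)]'(by simp; omega) = w[k] := by
      rw [List.getElem_drop]; congr 1; omega
    rw [← e1, ← e2]
    exact pair_sublist _ _ _ (by omega) (by simp; omega)
  have := List.Sublist.append h1 h2
  rwa [List.take_append_drop] at this

lemma I231_iff_Pat231 (w : List ℕ) : I231 w ↔ Pat231 w := by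
  constructor
  · rintro ⟨i, j, k, hij, hjk, hk, h1, h2⟩
    exact ⟨w[k], w[i]'(by omega), w[j]'(by omega), triple_sublist w i j k hij hjk hk, h1, h2⟩
  · rintro ⟨a, b, c, hsub, hab, hbc⟩
    rw [List.sublist_iff_exists_fin_orderEmbedding_get_eq] at hsub
    obtain ⟨f, hf⟩ := hsub
    simp only [List.length_cons, List.length_nil, Nat.reduceAdd] at f hf
    have h0 := hf 0
    have h1 := hf 1
    have h2 := hf 2
    simp [List.get] at h0 h1 h2
    refine ⟨f 0, f 1, f 2, f.strictMono (by decide), f.strictMono (by decide),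
      (f 2).isLt, ?_, ?_⟩ <;> omega



def I3142 (w : List ℕ) : Prop :=
  ∃ (i j k l : ℕ) (h1 : i < j) (h2 : j < k) (h3 : k < l) (hl : l < w.length),
    w[j]'(by omega) < w[l] ∧ w[l] < w[i]'(by omega) ∧ w[i]'(by omega) < w[k]'(by omega)

def FishL (w : List ℕ) : Prop :=
  ∀ i k : ℕ, ∀ (hik : i < k) (hk : k < w.length),
    w[i]'(by omega) = w[k] + 1 → ¬ (w[i]'(by omega) < w[i+1]'(by omega))

lemma seqContains_iff_I3142 (w : List ℕ) : SeqContains w [3,1,4,2] ↔ I3142 w := by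
  constructor
  · rintro ⟨f, hmono, hiff⟩
    simp only [List.length_cons, List.length_nil, Nat.reduceAdd] at f hmono hiff
    have h13 := (hiff 1 3).mp (by decide)
    have h30 := (hiff 3 0).mp (by decide)
    have h02 := (hiff 0 2).mp (by decide)
    simp only [List.get_eq_getElem] at h13 h30 h02
    exact ⟨f 0, f 1, f 2, f 3, hmono (by decide), hmono (by decide), hmono (by decide),
      (f 3).isLt, by convert h13 using 2, by convert h30 using 2, by convert h02 using 2⟩
  · rintro ⟨i, j, k, l, h1, h2, h3, hl, v1, v2, v3⟩
    refine ⟨![⟨i, by omega⟩, ⟨j, by omega⟩, ⟨k, by omega⟩, ⟨l, by omega⟩], ?_, ?_⟩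
    · intro a b hab
      fin_cases a <;> fin_cases b <;>
        simp_all [Fin.lt_def] <;> omega
    · intro a b
      fin_cases a <;> fin_cases b <;>
        simp [List.get_eq_getElem, show ((0:Fin 4):ℕ) = 0 from rfl, show ((1:Fin 4):ℕ) = 1 from rfl, show ((2:Fin 4):ℕ) = 2 from rfl, show ((3:Fin 4):ℕ) = 3 from rfl] <;> omega

lemma FishL_of_not_I231 {w : List ℕ} (h : ¬ I231 w) : FishL w := by
  intro i k hik hk heq hasc
  rcases Nat.lt_or_ge (i+1) k with hc | hc
  · exact h ⟨i, i+1, k, by omega, hc, hk, by omega, hasc⟩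
  · have : i + 1 = k := by omega
    subst this
    omega

lemma not_I3142_of_not_I231 {w : List ℕ} (h : ¬ I231 w) : ¬ I3142 w := by
  rintro ⟨i, j, k, l, h1, h2, h3, hl, v1, v2, v3⟩
  exact h ⟨i, k, l, by omega, h3, hl, by omega, v3⟩

lemma not_I231_of (w : List ℕ) {n : ℕ} (hw : w.Perm (List.range n))
    (hf : FishL w) (h4 : ¬ I3142 w) : ¬ I231 w := by
  have hnd : w.Nodup := hw.nodup_iff.mpr (List.nodup_range (n := n))
  have hmem : ∀ x, x ∈ w ↔ x < n := fun x => by rw [hw.mem_iff, List.mem_range]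
  have hval : ∀ (i : ℕ) (hi : i < w.length), w[i] < n := fun i hi =>
    (hmem _).mp (List.getElem_mem _)
  have inj : ∀ (i j : ℕ) (hi : i < w.length) (hj : j < w.length), w[i] = w[j] → i = j :=
    fun i j hi hj hij => (hnd.getElem_inj_iff).mp hij
  set L := w.length with hL
  rintro ⟨i, j, k, hij, hjk, hk, hv1, hv2⟩
  -- strong induction on measure w[i] * L + (L - i)
  have main : ∀ N : ℕ, ∀ i j k : ℕ, ∀ (hij : i < j) (hjk : j < k) (hk : k < L),
      w[k]'hk < w[i]'(by omega) → w[i]'(by omega) < w[j]'(by omega) →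
      w[i]'(by omega) * L + (L - i) ≤ N → False := by
    intro N
    induction N using Nat.strong_induction_on with
    | _ N ih =>
      intro i j k hij hjk hk hv1 hv2 hmeas
      have hi : i < L := by omega
      have hi1 : i + 1 < L := by omega
      rcases Nat.lt_trichotomy (w[i]'hi) (w[i+1]'hi1) with hasc | heq | hdesc
      · -- ascent at i
        have hpos : 0 < w[i]'hi := by omega
        rcases Nat.eq_or_lt_of_le (Nat.succ_le_of_lt hv1) with he | hlt
        · -- w[k] = w[i] - 1 : Fishburn violation
          exact hf i k (by omega) hk (by omega) hasc
        · -- w[k] + 1 < w[i]; v := w[i]-1 is somewhere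
          set v := w[i]'hi - 1 with hv
          have hvn : v < n := lt_trans (by omega) (hval i hi)
          obtain ⟨p, hp, hpv⟩ := List.getElem_of_mem ((hmem v).mpr hvn)
          have hpi : p ≠ i := fun hc => by subst hc; omega
          rcases Nat.lt_or_ge p i with hplt | hpge
          · -- new occurrence (p, j, k) with smaller value
            have mlt : w[p]'hp * L + (L - p) < N := by
              rw [hpv]
              have h1 : (v + 1) * L ≤ w[i]'hi * L :=
                Nat.mul_le_mul_right L (by omega)
              have h2 : v * L + L = (v+1) * L := by ring
              omega
            exact ih _ mlt p j k (by omega) hjk hk (by rw [hpv]; omega) (by rw [hpv]; omega)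
              (le_refl _)
          · -- p > i : Fishburn violation with (i, p)
            have : i < p := by omega
            exact hf i p this hp (by omega) hasc
      · exact absurd (inj i (i+1) hi hi1 heq) (by omega)
      · -- descent at i
        rcases Nat.lt_trichotomy (w[i+1]'hi1) (w[k]'hk) with hlt | heq2 | hgt
        · -- 3142 pattern (i, i+1, j, k)
          have hij1 : i + 1 < j := by
            rcases Nat.eq_or_lt_of_le (Nat.succ_le_of_lt hij) with he | h
            · exfalso
              have hw' : w[j]'(by omega) = w[i+1]'hi1 := by subst he; rfl
              omega
            · exact h
          exact h4 ⟨i, i+1, j, k, by omega, hij1, hjk, hk, hlt, by omega, hv2⟩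
        · have : i + 1 = k := inj _ _ hi1 hk heq2
          omega
        · -- new occurrence (i+1, j, k)
          have hij1 : i + 1 < j := by
            rcases Nat.eq_or_lt_of_le (Nat.succ_le_of_lt hij) with he | h
            · exfalso
              have hw' : w[j]'(by omega) = w[i+1]'hi1 := by subst he; rfl
              omega
            · exact h
          have mlt : w[i+1]'hi1 * L + (L - (i+1)) < N := by
            have h1 : (w[i+1]'hi1 + 1) * L ≤ w[i]'hi * L :=
              Nat.mul_le_mul_right L (by omega)
            have h2 : w[i+1]'hi1 * L + L = (w[i+1]'hi1 + 1) * L := by ring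
            omega
          exact ih _ mlt (i+1) j k hij1 hjk hk hgt (by omega) (le_refl _)
  exact main (w[i]'(by omega) * L + (L - i)) i j k hij hjk hk hv1 hv2 (le_refl _)



lemma pat231_of_sublist {u w : List ℕ} (h : List.Sublist u w) : Pat231 u → Pat231 w := by
  rintro ⟨a, b, c, hs, h1, h2⟩; exact ⟨a, b, c, hs.trans h, h1, h2⟩

lemma pat231_map_add (c : ℕ) (v : List ℕ) : Pat231 (v.map (· + c)) ↔ Pat231 v := by
  constructor
  · rintro ⟨a, b, c', hsub, h1, h2⟩
    rw [List.sublist_map_iff] at hsub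
    obtain ⟨u, hu, hmap⟩ := hsub
    rcases u with _ | ⟨x, _ | ⟨y, _ | ⟨z, _ | ⟨t, u⟩⟩⟩⟩ <;> simp at hmap
    obtain ⟨hx, hy, hz⟩ := hmap
    exact ⟨z, x, y, by simpa [hx, hy, hz] using hu, by omega, by omega⟩
  · rintro ⟨a, b, c', hsub, h1, h2⟩
    refine ⟨a + c, b + c, c' + c, ?_, by omega, by omega⟩
    simpa using hsub.map (· + c)

def toL : BinaryTree Unit → List ℕ
  | BinaryTree.nil => []
  | BinaryTree.node _ l r => toL l ++ (l.numNodes + r.numNodes) :: (toL r).map (· + l.numNodes)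

lemma length_toL (t : BinaryTree Unit) : (toL t).length = t.numNodes := by
  induction t with
  | nil => simp [toL]
  | node a l r ihl ihr => simp [toL, ihl, ihr, BinaryTree.numNodes]; omega

lemma toL_perm (t : BinaryTree Unit) : (toL t).Perm (List.range t.numNodes) := by
  induction t with
  | nil => simp [toL]
  | node a l r ihl ihr =>
    set L := l.numNodes
    set R := r.numNodes
    have h1 : (toL r).map (· + L) |>.Perm ((List.range R).map (· + L)) := ihr.map _
    have h2 : (toL (BinaryTree.node a l r)).Perm
        (List.range L ++ (L + R) :: (List.range R).map (· + L)) :=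
      List.Perm.append ihl (List.Perm.cons _ h1)
    have h3 : (List.range L ++ (L + R) :: (List.range R).map (· + L)).Perm
        ((List.range L ++ (List.range R).map (· + L)) ++ [L + R]) := by
      rw [List.append_assoc]
      exact List.Perm.append_left _ (List.perm_append_singleton _ _).symm
    have h4 : (List.range L ++ (List.range R).map (· + L)) ++ [L + R]
        = List.range (L + R + 1) := by
      rw [List.range_succ, List.range_add]
      congr 2
      exact List.map_congr_left fun x _ => Nat.add_comm x L
    have : (BinaryTree.node a l r).numNodes = L + R + 1 := rfl
    rw [this, ← h4]
    exact h2.trans h3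

lemma mem_toL {t : BinaryTree Unit} {x : ℕ} : x ∈ toL t ↔ x < t.numNodes := by
  rw [(toL_perm t).mem_iff, List.mem_range]

lemma not_pat231_toL (t : BinaryTree Unit) : ¬ Pat231 (toL t) := by
  induction t with
  | nil => rintro ⟨a, b, c, hs, -, -⟩; simp [toL] at hs
  | node u l r ihl ihr =>
    set L := l.numNodes with hLdef
    set R := r.numNodes
    rintro ⟨a, b, c, hs, h1, h2⟩
    rw [toL, List.sublist_append_iff] at hs
    obtain ⟨l1, l2, heq, hs1, hs2⟩ := hs
    have hmemA : ∀ x ∈ toL l, x < L := fun x hx => mem_toL.mp hx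
    rcases l1 with _ | ⟨x, _ | ⟨y, _ | ⟨z, _ | ⟨t', l1'⟩⟩⟩⟩ <;> simp_all
    · -- l2 = [b, c, a] <+ (L+R) :: B
      cases hs2 with
      | cons _ h =>
        rcases heq with ⟨rfl, rfl, rfl⟩
        rw [List.sublist_map_iff] at h
        obtain ⟨u', hu, hmap⟩ := h
        rcases u' with _ | ⟨x, _ | ⟨y, _ | ⟨z, _ | ⟨t', u'⟩⟩⟩⟩ <;> simp at hmap
        obtain ⟨hx, hy, hz⟩ := hmap
        exact ihr ⟨z, x, y, hu, by omega, by omega⟩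
      | cons_cons _ h =>
        rcases heq with ⟨rfl, h23⟩
        have hc : c ∈ (toL r).map (· + L) := by
          have : List.Sublist [c] ([c, a]) := by simp
          exact (this.trans h).subset (by simp)
        simp only [List.mem_map] at hc
        obtain ⟨y, hy, rfl⟩ := hc
        have := mem_toL.mp hy
        omega
    · -- l1 = [b], l2 = [c, a]
      obtain ⟨rfl, rfl, rfl⟩ := heq
      have hbL : b < L := hmemA _ (by simpa using hs1)
      cases hs2 with
      | cons _ h =>
        have ha : a ∈ (toL r).map (· + L) := by
          have : List.Sublist [a] ([c, a]) := by
            exact (List.sublist_cons_self c [a])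
          exact (this.trans h).subset (by simp)
        simp only [List.mem_map] at ha
        obtain ⟨y, hy, rfl⟩ := ha
        have := mem_toL.mp hy
        have hbL2 : b < L := hbL
        omega
      | cons_cons _ h =>
        have ha : a ∈ (toL r).map (· + L) := by simpa using h.subset (by simp)
        simp only [List.mem_map] at ha
        obtain ⟨y, hy, rfl⟩ := ha
        have := mem_toL.mp hy
        omega
    · -- l1 = [b, c], l2 = [a]
      obtain ⟨rfl, rfl, rfl⟩ := heq
      have hbL : b < L := hmemA _ (hs1.subset (by simp))
      have ha : a = L + R ∨ a ∈ (toL r).map (· + L) := by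
        have := hs2.subset (show a ∈ [a] by simp)
        simpa using this
      rcases ha with rfl | ha
      · omega
      · simp only [List.mem_map] at ha
        obtain ⟨y, hy, rfl⟩ := ha
        have := mem_toL.mp hy
        omega
    · -- l1 = [b, c, a], l2 = []
      exact ihl ⟨z, x, y, hs1, h1, h2⟩



lemma len_le_of_eq {A B A' B' : List ℕ} {m : ℕ}
    (heq : A ++ m :: B = A' ++ m :: B') (hA' : ∀ x ∈ A', x < m) :
    A'.length ≤ A.length := by
  by_contra hlt
  push_neg at hlt
  have h1 : (A ++ m :: B)[A.length]'(by simp) = m := by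
    rw [List.getElem_append_right (le_refl A.length)]
    simp
  have h2 : (A' ++ m :: B')[A.length]'(by rw [← heq]; simp) = A'[A.length]'hlt := by
    rw [List.getElem_append_left hlt]
  have h0 := List.getElem_of_eq heq (show A.length < (A ++ m :: B).length by simp)
  rw [h1, h2] at h0
  have := hA' _ (List.getElem_mem hlt)
  omega

lemma eq_split {A B A' B' : List ℕ} {m : ℕ}
    (heq : A ++ m :: B = A' ++ m :: B') (hA : ∀ x ∈ A, x < m) (hA' : ∀ x ∈ A', x < m) :
    A = A' ∧ B = B' := by
  have hlen : A.length = A'.length :=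
    le_antisymm (len_le_of_eq heq.symm hA) (len_le_of_eq heq hA')
  obtain ⟨h1, h2⟩ := List.append_inj heq hlen
  exact ⟨h1, by simpa using h2⟩

lemma toL_inj : Function.Injective toL := by
  intro t1
  induction t1 with
  | nil =>
    intro t2 h
    cases t2 with
    | nil => rfl
    | node b l2 r2 => simp [toL] at h
  | node a l r ihl ihr =>
    intro t2 h
    cases t2 with
    | nil => simp [toL] at h
    | node b l2 r2 =>
      have hlen := congrArg List.length h
      simp [toL, length_toL] at hlen
      have hm : l.numNodes + r.numNodes = l2.numNodes + r2.numNodes := by omega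
      rw [toL, toL, ← hm] at h
      obtain ⟨hA, hB⟩ := eq_split h
        (fun x hx => by have := mem_toL.mp hx; omega)
        (fun x hx => by have := mem_toL.mp hx; omega)
      have hl : l = l2 := ihl hA
      have hLL : l.numNodes = l2.numNodes := by rw [hl]
      have hr : r = r2 := by
        apply ihr
        apply List.map_injective_iff.mpr (add_left_injective l.numNodes)
        rw [hB, hLL]
      cases a; cases b
      rw [hl, hr]

lemma exists_toL : ∀ M (w : List ℕ), w.Perm (List.range M) → ¬ Pat231 w →
    ∃ t : BinaryTree Unit, toL t = w := by
  intro M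
  induction M using Nat.strong_induction_on with
  | _ M ih =>
    intro w hw hav
    rcases M with _ | m
    · have : w = [] := List.perm_nil.mp (by simpa using hw)
      exact ⟨BinaryTree.nil, by simp [toL, this]⟩
    · have hm : m ∈ w := hw.mem_iff.mpr (by simp)
      obtain ⟨A, B, hAB⟩ := List.append_of_mem hm
      subst hAB
      have hnd : (A ++ m :: B).Nodup := hw.nodup_iff.mpr List.nodup_range
      have hABperm : (A ++ B).Perm (List.range m) := by
        have h1 : (m :: (A ++ B)).Perm (m :: List.range m) := by
          refine (List.perm_middle.symm).trans (hw.trans ?_)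
          rw [List.range_succ]
          exact (List.perm_append_singleton _ _)
        exact h1.cons_inv
      have hmemAB : ∀ x ∈ A ++ B, x < m := fun x hx => by
        have := hABperm.mem_iff.mp hx; simpa using this
      have hndAB : (A ++ B).Nodup := hABperm.nodup_iff.mpr List.nodup_range
      have hdisj : ∀ a ∈ A, ∀ b ∈ B, a ≠ b := by
        intro a ha b hb
        exact fun hc => (List.disjoint_of_nodup_append hndAB) ha (hc ▸ hb)
      have key : ∀ a ∈ A, ∀ b ∈ B, b < a → False := by
        intro a ha b hb hba
        have hsub : List.Sublist [a, m, b] (A ++ m :: B) := by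
          have h1 : List.Sublist [a] A := List.singleton_sublist.mpr ha
          have h2 : List.Sublist [m, b] (m :: B) :=
            (List.singleton_sublist.mpr hb).cons₂ m
          exact List.Sublist.append h1 h2
        exact hav ⟨b, a, m, hsub, hba, hmemAB a (by simp [ha])⟩
      have hlt : ∀ a ∈ A, ∀ b ∈ B, a < b := by
        intro a ha b hb
        rcases Nat.lt_trichotomy a b with h | h | h
        · exact h
        · exact absurd h (hdisj a ha b hb)
        · exact absurd h (fun hc => key a ha b hb hc)
      set p := A.length with hp
      have hndA : A.Nodup := (List.nodup_append.mp hndAB).1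
      have hndB : B.Nodup := (List.nodup_append.mp hndAB).2.1
      have hAbound : ∀ a ∈ A, a < p := by
        intro a ha
        by_contra hap
        push_neg at hap
        have hsubset : Finset.range (a + 1) ⊆ A.toFinset := by
          intro x hx
          rw [Finset.mem_range] at hx
          have hxm : x < m := by
            have := hmemAB a (by simp [ha]); omega
          have : x ∈ A ++ B := by
            rw [hABperm.mem_iff]; simpa using hxm
          rw [List.mem_append] at this
          rcases this with h | h
          · simpa using h
          · exact absurd (hlt a ha x h) (by omega)
        have := Finset.card_le_card hsubset
        rw [Finset.card_range, List.toFinset_card_of_nodup hndA] at this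
        omega
      have hAfin : A.toFinset = Finset.range p := by
        apply Finset.eq_of_subset_of_card_le
        · intro x hx
          rw [Finset.mem_range]
          exact hAbound x (by simpa using hx)
        · rw [Finset.card_range, List.toFinset_card_of_nodup hndA]
      have hA : A.Perm (List.range p) := by
        apply List.perm_of_nodup_nodup_toFinset_eq hndA (List.nodup_range (n := p))
        rw [hAfin]
        ext x
        simp
      have hpm : p ≤ m := by
        have := hABperm.length_eq
        simp at this
        omega
      have hBbound : ∀ b ∈ B, p ≤ b ∧ b < m := by
        intro b hb
        constructor
        · by_contra hbp
          push_neg at hbp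
          have : b ∈ A.toFinset := by rw [hAfin]; simpa using hbp
          rw [List.mem_toFinset] at this
          exact absurd rfl (hdisj b this b hb)
        · exact hmemAB b (by simp [hb])
      have hB : B.Perm ((List.range (m - p)).map (· + p)) := by
        apply List.perm_of_nodup_nodup_toFinset_eq hndB
        · exact List.nodup_range.map (add_left_injective p)
        · ext x
          simp only [List.mem_toFinset, List.mem_map, List.mem_range]
          constructor
          · intro hx
            obtain ⟨h1, h2⟩ := hBbound x hx
            exact ⟨x - p, by omega, by omega⟩
          · rintro ⟨y, hy, rfl⟩
            have hxm : y + p < m := by omega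
            have : y + p ∈ A ++ B := by rw [hABperm.mem_iff]; simpa using hxm
            rw [List.mem_append] at this
            rcases this with h | h
            · have := hAbound _ h; omega
            · exact h
      set C := B.map (· - p) with hC
      have hBC : B = C.map (· + p) := by
        rw [hC, List.map_map]
        have : ∀ b ∈ B, ((· + p) ∘ (· - p)) b = id b := by
          intro b hb
          have := (hBbound b hb).1
          simp [Function.comp]
          omega
        rw [List.map_congr_left this, List.map_id]
      have hCperm : C.Perm (List.range (m - p)) := by
        have h1 := hB.map (· - p)
        rw [List.map_map] at h1
        have : ∀ x ∈ List.range (m - p), ((· - p) ∘ (· + p)) x = id x := by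
          intro x hx; simp [Function.comp]
        rwa [List.map_congr_left this, List.map_id] at h1
      have havA : ¬ Pat231 A :=
        fun h => hav (pat231_of_sublist (List.sublist_append_left A (m :: B)) h)
      have havB : ¬ Pat231 B :=
        fun h => hav (pat231_of_sublist
          ((List.sublist_cons_self m B).trans (List.sublist_append_right A (m :: B))) h)
      have havC : ¬ Pat231 C := by
        intro h
        apply havB
        rw [hBC]
        exact (pat231_map_add p C).mpr h
      obtain ⟨tl, htl⟩ := ih p (by omega) A hA havA
      obtain ⟨tr, htr⟩ := ih (m - p) (by omega) C hCperm havC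
      refine ⟨BinaryTree.node () tl tr, ?_⟩
      have hL : tl.numNodes = p := by rw [← length_toL, htl]
      have hR : tr.numNodes = m - p := by
        rw [← length_toL, htr]
        exact (hCperm.length_eq).trans (by simp)
      have hmp : p + (m - p) = m := by omega
      rw [toL, htl, htr, hL, hR, hmp, ← hBC]

def treeSet (m : ℕ) : Finset (List ℕ) := (BinaryTree.treesOfNumNodesEq m).image toL

lemma card_treeSet (m : ℕ) : (treeSet m).card = catalan m := by
  rw [treeSet, Finset.card_image_of_injective _ toL_inj,
    BinaryTree.treesOfNumNodesEq_card_eq_catalan]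

lemma mem_treeSet {m : ℕ} {w : List ℕ} :
    w ∈ treeSet m ↔ w.Perm (List.range m) ∧ ¬ Pat231 w := by
  constructor
  · intro hw
    rw [treeSet, Finset.mem_image] at hw
    obtain ⟨t, ht, rfl⟩ := hw
    rw [BinaryTree.mem_treesOfNumNodesEq] at ht
    exact ⟨ht ▸ toL_perm t, not_pat231_toL t⟩
  · rintro ⟨hperm, hav⟩
    obtain ⟨t, rfl⟩ := exists_toL m w hperm hav
    rw [treeSet, Finset.mem_image]
    refine ⟨t, ?_, rfl⟩
    rw [BinaryTree.mem_treesOfNumNodesEq, ← length_toL]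
    exact hperm.length_eq.trans (by simp)


-- ===== glue: permList lemmas =====

lemma permList_length {n : ℕ} (π : Equiv.Perm (Fin n)) : (permList π).length = n := by
  simp [permList]

lemma permList_getElem {n : ℕ} (π : Equiv.Perm (Fin n)) (i : ℕ) (hi : i < n) :
    (permList π)[i]'(by simp [permList_length, hi]) = (π ⟨i, hi⟩ : ℕ) := by
  simp [permList]

lemma permList_perm {n : ℕ} (π : Equiv.Perm (Fin n)) :
    (permList π).Perm (List.range n) := by
  apply List.perm_of_nodup_nodup_toFinset_eq
  · exact (List.nodup_finRange n).map (Fin.val_injective.comp π.injective)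
  · exact List.nodup_range (n := n)
  · ext x
    simp only [List.mem_toFinset, permList, List.mem_map, List.mem_finRange, true_and,
      List.mem_range]
    constructor
    · rintro ⟨i, rfl⟩; exact (π i).isLt
    · intro hx; exact ⟨π.symm ⟨x, hx⟩, by simp⟩

lemma permList_inj {n : ℕ} : Function.Injective (permList (n := n)) := by
  intro π π' h
  apply Equiv.ext
  intro i
  apply Fin.ext
  have h0 := List.getElem_of_eq h (show (i : ℕ) < (permList π).length by
    rw [permList_length]; exact i.isLt)
  rw [permList_getElem π i.val i.isLt, permList_getElem π' i.val i.isLt] at h0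
  simpa using h0

lemma exists_perm {n : ℕ} (w : List ℕ) (hw : w.Perm (List.range n)) :
    ∃ π : Equiv.Perm (Fin n), permList π = w := by
  have hlen : w.length = n := hw.length_eq.trans (by simp)
  have hnd : w.Nodup := hw.nodup_iff.mpr (List.nodup_range (n := n))
  have hmem : ∀ i (hi : i < w.length), w[i] < n := by
    intro i hi
    have : w[i] ∈ w := List.getElem_mem hi
    rw [hw.mem_iff, List.mem_range] at this
    exact this
  let f : Fin n → Fin n := fun i => ⟨w[i.val]'(by omega), hmem i.val (by omega)⟩
  have hinj : Function.Injective f := by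
    intro a b hab
    apply Fin.ext
    exact hnd.getElem_inj_iff.mp (congrArg Fin.val hab)
  have hbij : Function.Bijective f := Finite.injective_iff_bijective.mp hinj
  refine ⟨Equiv.ofBijective f hbij, ?_⟩
  apply List.ext_getElem (by simp [permList_length, hlen])
  intro i h1 h2
  rw [permList_getElem _ i (by omega)]
  rfl

lemma isFishburn_iff {n : ℕ} (π : Equiv.Perm (Fin n)) :
    IsFishburn π ↔ FishL (permList π) := by
  constructor
  · intro h i k hik hk heq hasc
    rw [permList_length] at hk
    have hi : i < n := by omega
    have hi1 : i + 1 < n := by omega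
    rw [permList_getElem π i hi, permList_getElem π k hk] at heq
    rw [permList_getElem π i hi, permList_getElem π (i+1) hi1] at hasc
    exact h i k hi hk hik heq hasc
  · intro h i k hi hk hik heq hasc
    have hk' : k < (permList π).length := by rw [permList_length]; exact hk
    refine h i k hik hk' ?_ ?_
    · rw [permList_getElem π i hi, permList_getElem π k hk]; exact heq
    · rw [permList_getElem π i hi, permList_getElem π (i+1) (by omega)]
      exact hasc

lemma head_eq {n : ℕ} (π : Equiv.Perm (Fin n)) (hn : 0 < n)
    (h231 : ¬ I231 (permList π)) (hind : IsIndecomposable π) :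
    (π ⟨0, hn⟩ : ℕ) = n - 1 := by
  by_contra hne
  set M : Fin n := π.symm ⟨n - 1, by omega⟩ with hMdef
  have hM : (π M : ℕ) = n - 1 := by simp [hMdef]
  have hMpos : 0 < (M : ℕ) := by
    rcases Nat.eq_zero_or_pos (M : ℕ) with h0 | h
    · exfalso
      apply hne
      have : M = ⟨0, hn⟩ := Fin.ext h0
      rw [← this]; exact hM
    · exact h
  apply hind
  refine ⟨(M : ℕ), hMpos, M.isLt, ?_⟩
  intro i hi
  have hiM : i ≠ M := fun hc => by rw [hc] at hi; omega
  have hπi_lt : (π i : ℕ) < n - 1 := by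
    have hne2 : π i ≠ π M := fun hc => hiM (π.injective hc)
    have : (π i : ℕ) ≠ n - 1 := fun hc => hne2 (Fin.ext (by rw [hc, hM]))
    have := (π i).isLt
    omega
  have claim : ∀ p : Fin n, (π p : ℕ) ≤ (π i : ℕ) → (p : ℕ) < (M : ℕ) := by
    intro p hp
    by_contra hpc
    push_neg at hpc
    have hpM : (p : ℕ) ≠ (M : ℕ) := by
      intro hc
      have : p = M := Fin.ext hc
      rw [this, hM] at hp
      omega
    have hMp : (M : ℕ) < (p : ℕ) := by omega
    have hpi : p ≠ i := by
      intro hc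
      subst hc
      omega
    have hπp : (π p : ℕ) < (π i : ℕ) := by
      rcases Nat.eq_or_lt_of_le hp with h | h
      · exact absurd (π.injective (Fin.ext h)) hpi
      · exact h
    apply h231
    refine ⟨(i : ℕ), (M : ℕ), (p : ℕ), hi, hMp, by rw [permList_length]; exact p.isLt, ?_, ?_⟩
    · rw [permList_getElem π _ p.isLt, permList_getElem π _ (by omega : (i:ℕ) < n)]
      simp only [Fin.eta]
      omega
    · rw [permList_getElem π _ (by omega : (i:ℕ) < n), permList_getElem π _ M.isLt]
      simp only [Fin.eta]
      omega
  have hsub : Finset.univ.filter (fun p : Fin n => (π p : ℕ) ≤ (π i : ℕ)) ⊆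
      Finset.univ.filter (fun p : Fin n => (p : ℕ) < (M : ℕ)) := by
    intro p hp
    simp only [Finset.mem_filter, Finset.mem_univ, true_and] at hp ⊢
    exact claim p hp
  have hcard1 : (Finset.univ.filter (fun p : Fin n => (π p : ℕ) ≤ (π i : ℕ))).card
      = (π i : ℕ) + 1 := by
    have hbij : (Finset.univ.filter (fun p : Fin n => (π p : ℕ) ≤ (π i : ℕ))).card
        = (Finset.univ.filter (fun v : Fin n => (v : ℕ) ≤ (π i : ℕ))).card := by
      apply Finset.card_bij (fun p _ => π p)
      · intro p hp
        simp only [Finset.mem_filter, Finset.mem_univ, true_and] at hp ⊢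
        exact hp
      · intro p _ q _ h
        exact π.injective h
      · intro v hv
        simp only [Finset.mem_filter, Finset.mem_univ, true_and] at hv
        exact ⟨π.symm v, by simpa using hv, by simp⟩
    rw [hbij]
    have : (Finset.univ.filter (fun v : Fin n => (v : ℕ) ≤ (π i : ℕ)))
        = Finset.Iic ⟨(π i : ℕ), by omega⟩ := by
      ext v
      simp only [Finset.mem_filter, Finset.mem_univ, true_and, Finset.mem_Iic]
      rw [Fin.le_def]
    rw [this, Fin.card_Iic]
  have hcard2 : (Finset.univ.filter (fun p : Fin n => (p : ℕ) < (M : ℕ))).card = (M : ℕ) := by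
    have : (Finset.univ.filter (fun p : Fin n => (p : ℕ) < (M : ℕ))) = Finset.Iio M := by
      ext v
      simp only [Finset.mem_filter, Finset.mem_univ, true_and, Finset.mem_Iio]
      rw [Fin.lt_def]
    rw [this, Fin.card_Iio]
  have := Finset.card_le_card hsub
  omega

lemma indec_of_head {n : ℕ} (π : Equiv.Perm (Fin n)) (hn : 0 < n)
    (h : (π ⟨0, hn⟩ : ℕ) = n - 1) : IsIndecomposable π := by
  rintro ⟨k, hk0, hkn, hall⟩
  have := hall ⟨0, hn⟩ (by simpa using hk0)
  rw [h] at this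
  omega

lemma pat231_cons_iff {v : List ℕ} {M : ℕ} (hv : ∀ x ∈ v, x < M) :
    Pat231 (M :: v) ↔ Pat231 v := by
  constructor
  · rintro ⟨a, b, c, hs, h1, h2⟩
    cases hs with
    | cons _ h => exact ⟨a, b, c, h, h1, h2⟩
    | cons_cons _ h =>
      exfalso
      have hc : c ∈ v := by
        have : List.Sublist [c] [c, a] := by simp
        exact (this.trans h).subset (by simp)
      have := hv c hc
      omega
  · rintro ⟨a, b, c, hs, h1, h2⟩
    exact ⟨a, b, c, hs.cons M, h1, h2⟩

-- ===== the main equivalence =====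

lemma main_iff {n : ℕ} (hn : 1 ≤ n) (π : Equiv.Perm (Fin n)) :
    (IsIndecomposable π ∧ IsFishburn π ∧ AvoidsPat π [3, 1, 4, 2]) ↔
      permList π ∈ (treeSet (n - 1)).image (List.cons (n - 1)) := by
  have wperm := permList_perm π
  constructor
  · rintro ⟨hind, hfish, hav⟩
    have h231 : ¬ I231 (permList π) :=
      not_I231_of (permList π) wperm ((isFishburn_iff π).mp hfish)
        (fun h => hav ((seqContains_iff_I3142 (permList π)).mpr h))
    have hhead := head_eq π (by omega) h231 hind
    obtain ⟨v, hvw⟩ : ∃ v, permList π = (n - 1) :: v := by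
      have hlen : (permList π).length = n := permList_length π
      rcases hw : permList π with _ | ⟨h0, v⟩
      · rw [hw] at hlen; simp at hlen; omega
      · refine ⟨v, ?_⟩
        have h1 : (permList π)[0]'(by rw [hlen]; omega) = h0 :=
          (List.getElem_of_eq hw (by rw [hlen]; omega)).trans rfl
        rw [permList_getElem π 0 (by omega), hhead] at h1
        rw [h1]
    have hvperm : v.Perm (List.range (n - 1)) := by
      have h1 : ((n-1) :: v).Perm ((n-1) :: List.range (n - 1)) := by
        rw [← hvw]
        refine wperm.trans ?_
        have : n = (n - 1) + 1 := by omega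
        rw [this, List.range_succ]
        simpa using List.perm_append_singleton _ _
      exact h1.cons_inv
    have hpat : ¬ Pat231 (permList π) := fun h => h231 ((I231_iff_Pat231 _).mpr h)
    have hvpat : ¬ Pat231 v := by
      intro h
      apply hpat
      rw [hvw]
      exact pat231_of_sublist (List.sublist_cons_self (n-1) v) h
    rw [Finset.mem_image]
    exact ⟨v, mem_treeSet.mpr ⟨hvperm, hvpat⟩, hvw.symm⟩
  · intro hmem
    rw [Finset.mem_image] at hmem
    obtain ⟨v, hv, hvw⟩ := hmem
    rw [mem_treeSet] at hv
    obtain ⟨hvperm, hvpat⟩ := hv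
    have hvlt : ∀ x ∈ v, x < n - 1 := by
      intro x hx
      rw [hvperm.mem_iff, List.mem_range] at hx
      exact hx
    have hwpat : ¬ Pat231 (permList π) := by
      rw [← hvw]
      rw [pat231_cons_iff hvlt]
      exact hvpat
    have h231 : ¬ I231 (permList π) := fun h => hwpat ((I231_iff_Pat231 _).mp h)
    have hhead : (π ⟨0, by omega⟩ : ℕ) = n - 1 := by
      have h0 := List.getElem_of_eq hvw (show (0:ℕ) < ((n-1) :: v).length by simp)
      rw [permList_getElem π 0 (by omega)] at h0
      simpa using h0.symm
    refine ⟨indec_of_head π (by omega) hhead, (isFishburn_iff π).mpr (FishL_of_not_I231 h231),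
      fun h => not_I3142_of_not_I231 h231 ((seqContains_iff_I3142 _).mp h)⟩

end S19

theorem stmt19 (n : ℕ) (hn : 1 ≤ n) :
    Nat.card {π : Equiv.Perm (Fin n) //
        IsIndecomposable π ∧ IsFishburn π ∧ AvoidsPat π [3, 1, 4, 2]} =
      catalan (n - 1) := by
  classical
  rw [Nat.card_eq_fintype_card, Fintype.card_subtype]
  have hT : ((S19.treeSet (n - 1)).image (List.cons (n - 1))).card = catalan (n - 1) := by
    rw [Finset.card_image_of_injective _ (fun x y h => by simpa using h),
      S19.card_treeSet]
  rw [← hT]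
  apply Finset.card_bij (fun π _ => permList π)
  · intro π hπ
    rw [Finset.mem_filter] at hπ
    exact (S19.main_iff hn π).mp hπ.2
  · intro π _ π' _ h
    exact S19.permList_inj h
  · intro w hw
    have hwperm : w.Perm (List.range n) := by
      rw [Finset.mem_image] at hw
      obtain ⟨v, hv, rfl⟩ := hw
      rw [S19.mem_treeSet] at hv
      have h1 : ((n-1) :: v).Perm ((n-1) :: List.range (n - 1)) := (hv.1).cons _
      refine h1.trans ?_
      have : n = (n - 1) + 1 := by omega
      rw [this, List.range_succ]
      exact (List.perm_append_singleton _ _).symm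
    obtain ⟨π, hπ⟩ := S19.exists_perm w hwperm
    refine ⟨π, ?_, hπ⟩
    rw [Finset.mem_filter]
    exact ⟨Finset.mem_univ _, (S19.main_iff hn π).mpr (by rw [hπ]; exact hw)⟩
end
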